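/- arXiv:math/0412357 — 5 statements merged into one kernel-verified Lean document; each statement's English description precedes it below -/
import Mathlib

section
/- Let V be a finite-dimensional vector space over a field Ω of characteristic zero, let φ be an invertible linear endomorphism of V, let N be a linear endomorphism of V, and let q ≥ 2 be an integer. If N ∘ φ = q • (φ ∘ N), then N is nilpotent. -/
/-- Conjugation by a unit as an algebra automorphism. -/
noncomputable def conjUnitAlgEquiv {R A : Type*} [CommSemiring R] [Semiring A] [Algebra R A]
    (u : Aˣ) : A ≃ₐ[R] A where
  toFun x := ↑u⁻¹ * x * ↑u
  invFun x := ↑u * x * ↑u⁻¹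
  left_inv x := by
    simp only [mul_assoc, Units.mul_inv, mul_one]
    rw [← mul_assoc, Units.mul_inv, one_mul]
  right_inv x := by
    simp only [mul_assoc, Units.inv_mul, mul_one]
    rw [← mul_assoc, Units.inv_mul, one_mul]
  map_mul' x y := by
    have : (x : A) * y = x * (↑u * ↑u⁻¹) * y := by rw [Units.mul_inv, mul_one]
    rw [this]
    simp [mul_assoc]
  map_add' x y := by noncomm_ring
  commutes' r := by
    show (↑u⁻¹ * algebraMap R A r * ↑u : A) = algebraMap R A r
    rw [mul_assoc, Algebra.commutes r (u : A), ← mul_assoc, Units.inv_mul, one_mul]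

/-- Let `V` be a finite-dimensional vector space over a field `Ω` of
characteristic zero, let `φ` be an invertible linear endomorphism of `V`, let `N` be a
linear endomorphism of `V`, and let `q ≥ 2` be an integer.  If `N ∘ φ = q • (φ ∘ N)`,
then `N` is nilpotent. -/
theorem statement0 {Ω V : Type*} [Field Ω] [CharZero Ω] [AddCommGroup V] [Module Ω V]
    [FiniteDimensional Ω V] (q : ℕ) (hq : 2 ≤ q) (φ N : Module.End Ω V)
    (hφ : IsUnit φ) (hrel : N * φ = (q : Ω) • (φ * N)) :
    IsNilpotent N := by
  classical
  obtain ⟨u, hu⟩ := hφ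
  have hqΩ : (q : Ω) ≠ 0 := Nat.cast_ne_zero.mpr (by omega)
  -- the conjugate of `N` by `u` is `(q:Ω) • N`
  have hconj : (↑u⁻¹ * N * ↑u : Module.End Ω V) = (q : Ω) • N := by
    have : (N : Module.End Ω V) * ↑u = (q : Ω) • (↑u * N) := by rw [hu]; exact hrel
    calc (↑u⁻¹ * N * ↑u : Module.End Ω V) = ↑u⁻¹ * (N * ↑u) := by rw [mul_assoc]
      _ = ↑u⁻¹ * ((q : Ω) • (↑u * N)) := by rw [this]
      _ = (q : Ω) • (↑u⁻¹ * (↑u * N)) := by rw [mul_smul_comm]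
      _ = (q : Ω) • N := by rw [← mul_assoc, Units.inv_mul, one_mul]
  -- hence `N` and `(q:Ω) • N` have the same minimal polynomial
  set m : Polynomial Ω := minpoly Ω N with hm
  have hint : IsIntegral Ω N := LinearMap.isIntegral N
  have hmonic : m.Monic := minpoly.monic hint
  have hmm : minpoly Ω ((q : Ω) • N) = m := by
    rw [← hconj]
    exact minpoly.algEquiv_eq (conjUnitAlgEquiv u) N
  set d : ℕ := m.natDegree with hd
  -- `scaleRoots m q⁻¹` annihilates `N`
  have haev : Polynomial.aeval N (m.scaleRoots (q : Ω)⁻¹) = 0 := by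
    have h0 : Polynomial.aeval ((q : Ω) • N) m = 0 := by
      rw [← hmm]; exact minpoly.aeval Ω _
    have := Polynomial.scaleRoots_aeval_eq_zero (r := (q : Ω)⁻¹) h0
    have heq : algebraMap Ω (Module.End Ω V) (q : Ω)⁻¹ * ((q : Ω) • N) = N := by
      rw [Algebra.smul_def, ← mul_assoc, ← map_mul, inv_mul_cancel₀ hqΩ, map_one, one_mul]
    rwa [heq] at this
  -- so it equals `m`, being monic of the same degree
  have hdvd : m ∣ m.scaleRoots (q : Ω)⁻¹ := minpoly.dvd Ω N haev
  have hsc : m.scaleRoots (q : Ω)⁻¹ = m := by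
    obtain ⟨c, hc⟩ := hdvd
    have hscm : (m.scaleRoots (q : Ω)⁻¹).Monic := (Polynomial.monic_scaleRoots_iff _).mpr hmonic
    have hmne : m ≠ 0 := hmonic.ne_zero
    have hcne : c ≠ 0 := by
      rintro rfl; rw [mul_zero] at hc; exact hscm.ne_zero hc
    have hdeg : m.natDegree + c.natDegree = m.natDegree := by
      rw [← Polynomial.natDegree_mul hmne hcne, ← hc, Polynomial.natDegree_scaleRoots]
    have hc0 : c.natDegree = 0 := by omega
    rcases Polynomial.natDegree_eq_zero.mp hc0 with ⟨a, rfl⟩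
    have ha : a = 1 := by
      have h1 := hscm.leadingCoeff
      rwa [hc, Polynomial.leadingCoeff_mul, Polynomial.leadingCoeff_C, hmonic.leadingCoeff,
        one_mul] at h1
    rw [hc, ha, map_one, mul_one]
  -- coefficient comparison: all coefficients below the degree vanish
  have hcoeff : ∀ i, i < d → m.coeff i = 0 := by
    intro i hi
    have h1 : m.coeff i * ((q : Ω)⁻¹) ^ (d - i) = m.coeff i := by
      conv_rhs => rw [← hsc]
      rw [Polynomial.coeff_scaleRoots]
    by_contra hne
    have h2 : ((q : Ω)⁻¹) ^ (d - i) = 1 :=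
      mul_left_cancel₀ hne (h1.trans (mul_one _).symm)
    have h3 : ((q : Ω)) ^ (d - i) = 1 := by
      rw [inv_pow] at h2
      have := congrArg (· * (q : Ω) ^ (d - i)) h2
      simpa [inv_mul_cancel₀ (pow_ne_zero _ hqΩ)] using this.symm
    have h4 : ((q ^ (d - i) : ℕ) : Ω) = ((1 : ℕ) : Ω) := by push_cast; rw [h3]
    have h5 : q ^ (d - i) = 1 := Nat.cast_injective h4
    have : 2 ^ (d - i) ≤ q ^ (d - i) := Nat.pow_le_pow_left hq _
    have h6 : 1 < 2 ^ (d - i) := Nat.one_lt_two_pow (by omega)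
    omega
  -- hence the minimal polynomial is `X ^ d`, so `N ^ d = 0`
  have hX : m = Polynomial.X ^ d := by
    ext j
    rcases lt_trichotomy j d with hj | rfl | hj
    · rw [hcoeff j hj, Polynomial.coeff_X_pow]
      simp [Nat.ne_of_lt hj]
    · rw [Polynomial.coeff_X_pow]
      rw [if_pos rfl]; exact hmonic.coeff_natDegree
    · rw [Polynomial.coeff_eq_zero_of_natDegree_lt hj, Polynomial.coeff_X_pow]
      simp [Nat.ne_of_lt' hj]
  refine ⟨d, ?_⟩
  have := minpoly.aeval Ω N
  rwa [← hm, hX, map_pow, Polynomial.aeval_X] at this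
end

section
/- Let (φ, N) be a Weil–Deligne pair on a finite-dimensional Ω-vector space V, and write φ = s ∘ u = u ∘ s where s is a diagonalizable invertible endomorphism of V and u is unipotent (u − id is nilpotent). Then (s, N) is again a Weil–Deligne pair (i.e. N ∘ s = q • (s ∘ N)), and for every k ∈ ℚ the pair (φ, N) is pure of weight k if and only if the pair (s, N) is pure of weight k. (A Weil–Deligne representation is pure if and only if its Frobenius semisimplification is pure; part (1) of Lemma 1.2.) -/
open Module

section WeilDeligne

variable {Ω V : Type*} [Field Ω] [CharZero Ω] [AddCommGroup V] [Module Ω V]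

/-- `α ∈ Ω` is a Weil `q^w`-number: it is algebraic over `ℚ` and for every embedding
`σ : Ω → ℂ` one has `|σ α|² = q^w` (real exponentiation). -/
def IsWeilNumber (q : ℕ) (w : ℚ) (α : Ω) : Prop :=
  IsAlgebraic ℚ α ∧ ∀ σ : Ω →+* ℂ, (‖σ α‖) ^ 2 = (q : ℝ) ^ (w : ℝ)

/-- The weight-`w` part `V_w` of `V` relative to `φ`: the sum of the generalized
eigenspaces of `φ` for those eigenvalues which are Weil `q^w`-numbers. -/
noncomputable def wdWeightSpace (q : ℕ) (φ : Module.End Ω V) (w : ℚ) : Submodule Ω V :=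
  ⨆ α ∈ {α : Ω | IsWeilNumber q w α}, φ.maxGenEigenspace α

/-- `(φ, N)` is mixed: `V` is the internal direct sum of the `V_w`, `w ∈ ℚ`. -/
def WDMixed (q : ℕ) (φ : Module.End Ω V) : Prop :=
  DirectSum.IsInternal fun w : ℚ => wdWeightSpace q φ w

/-- `(φ, N)` is pure of weight `k`: it is mixed, all weights lie in `k + ℤ`, and for every
`i ≥ 1` the map `N^i` restricts to a bijection from `V_{k+i}` onto `V_{k-i}`. -/
def WDPure (q : ℕ) (φ N : Module.End Ω V) (k : ℚ) : Prop :=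
  WDMixed q φ ∧
  (∀ w : ℚ, (¬ ∃ i : ℤ, w = k + i) → wdWeightSpace q φ w = ⊥) ∧
  ∀ i : ℤ, 1 ≤ i →
    (∀ x ∈ wdWeightSpace q φ (k + i), (N ^ i.toNat) x = 0 → x = 0) ∧
    Submodule.map (N ^ i.toNat) (wdWeightSpace q φ (k + i)) = wdWeightSpace q φ (k - i)

end WeilDeligne

/-- Write `φ = s ∘ u = u ∘ s` with `s` diagonalizable and invertible and `u`
unipotent.  Then `(s, N)` is again a Weil–Deligne pair, and `(φ, N)` is pure of weight `k`
if and only if `(s, N)` is pure of weight `k` (purity is invariant under Frobenius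
semisimplification). -/
theorem statement4 {Ω V : Type*} [Field Ω] [CharZero Ω] [IsAlgClosed Ω]
    [AddCommGroup V] [Module Ω V] [FiniteDimensional Ω V]
    (q : ℕ) (hq : 2 ≤ q) (φ N s u : Module.End Ω V)
    (hφ : IsUnit φ) (hrel : N * φ = (q : Ω) • (φ * N))
    (hsu : φ = s * u) (hus : φ = u * s)
    (hs : IsUnit s) (hdiag : (⨆ α : Ω, s.eigenspace α) = ⊤)
    (hu : IsNilpotent (u - 1)) :
    N * s = (q : Ω) • (s * N) ∧
    ∀ k : ℚ, WDPure q φ N k ↔ WDPure q s N k := by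
  obtain ⟨n, hn⟩ := hu
  have hq0 : (q : Ω) ≠ 0 := Nat.cast_ne_zero.mpr (by omega)
  have hsu' : s * u = u * s := hsu.symm.trans hus
  -- `u` preserves the eigenspaces of `s`
  have hsuy : ∀ (α : Ω) (y : V), s y = α • y → s (u y) = α • u y := by
    intro α y hy
    have h1 : s (u y) = u (s y) := by
      have := congrArg (fun f : Module.End Ω V => f y) hsu'
      simpa [Module.End.mul_apply] using this
    rw [h1, hy, map_smul]
  -- `(φ - α•1)` acts as `α • (u - 1)` on the `α`-eigenspace of `s`
  have hstep : ∀ (α : Ω) (y : V), s y = α • y →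
      (φ - α • (1 : Module.End Ω V)) y = α • ((u - (1 : Module.End Ω V)) y) := by
    intro α y hy
    have hφy : φ y = s (u y) := by
      have := congrArg (fun f : Module.End Ω V => f y) hsu
      simpa [Module.End.mul_apply] using this
    simp only [LinearMap.sub_apply, LinearMap.smul_apply, Module.End.one_apply,
      hφy, hsuy α y hy, smul_sub]
  have key : ∀ (α : Ω) (m : ℕ) (y : V), s y = α • y →
      ((φ - α • (1 : Module.End Ω V)) ^ m) y
        = α ^ m • (((u - (1 : Module.End Ω V)) ^ m) y) := by
    intro α m
    induction m with
    | zero => intro y _; simp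
    | succ m ih =>
      intro y hy
      have huy : s ((u - 1) y) = α • ((u - 1) y) := by
        simp only [LinearMap.sub_apply, Module.End.one_apply, map_sub, hsuy α y hy, hy, smul_sub]
      rw [pow_succ, Module.End.mul_apply, pow_succ (u - (1 : Module.End Ω V)) m,
        Module.End.mul_apply, hstep α y hy, map_smul, ih _ huy, smul_smul, pow_succ, mul_comm]
  -- eigenspaces of `s` lie inside the generalized eigenspaces of `φ` (and of `s`)
  have hEφ : ∀ α : Ω, s.eigenspace α ≤ φ.maxGenEigenspace α := by
    intro α x hx
    rw [Module.End.mem_maxGenEigenspace]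
    refine ⟨n, ?_⟩
    rw [key α n x (Module.End.mem_eigenspace_iff.mp hx), hn]
    simp
  have hEs : ∀ α : Ω, s.eigenspace α ≤ s.maxGenEigenspace α := by
    intro α x hx
    rw [Module.End.mem_maxGenEigenspace]
    refine ⟨1, ?_⟩
    simp [pow_one, LinearMap.sub_apply, LinearMap.smul_apply, Module.End.one_apply,
      Module.End.mem_eigenspace_iff.mp hx, sub_eq_zero]
  -- a lattice argument: an independent family above a spanning family coincides with it
  have latt : ∀ (G : Ω → Submodule Ω V), iSupIndep G →
      (∀ α, s.eigenspace α ≤ G α) → ∀ α, G α = s.eigenspace α := by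
    intro G hind hle α
    refine le_antisymm ?_ (hle α)
    have htop : (⊤ : Submodule Ω V) ≤ (⨆ β, ⨆ _ : β ≠ α, G β) ⊔ s.eigenspace α := by
      rw [← hdiag]
      refine iSup_le fun β => ?_
      by_cases hba : β = α
      · exact hba ▸ le_sup_right
      · exact le_trans (hle β) (le_trans (le_iSup₂ (f := fun β _ => G β) β hba) le_sup_left)
    calc G α = G α ⊓ ⊤ := (inf_top_eq _).symm
      _ ≤ G α ⊓ ((⨆ β, ⨆ _ : β ≠ α, G β) ⊔ s.eigenspace α) := inf_le_inf_left _ htop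
      _ = (G α ⊓ ⨆ β, ⨆ _ : β ≠ α, G β) ⊔ s.eigenspace α :=
          (inf_sup_assoc_of_le _ (hle α)).symm
      _ ≤ ⊥ ⊔ s.eigenspace α := sup_le_sup_right (hind α).le_bot _
      _ = s.eigenspace α := bot_sup_eq _
  have hmaxφ : ∀ α, φ.maxGenEigenspace α = s.eigenspace α :=
    latt _ φ.independent_maxGenEigenspace hEφ
  have hmaxs : ∀ α, s.maxGenEigenspace α = s.eigenspace α :=
    latt _ s.independent_maxGenEigenspace hEs
  -- hence the weight spaces of `φ` and `s` coincide
  have hw : ∀ w : ℚ, wdWeightSpace q φ w = wdWeightSpace q s w := by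
    intro w
    simp only [wdWeightSpace]
    exact iSup_congr fun α => iSup_congr fun _ => (hmaxφ α).trans (hmaxs α).symm
  -- `N` shifts eigenvalues of `s` by `q⁻¹`
  have hNshift : ∀ (α : Ω) (x : V), s x = α • x → s (N x) = (α * (q:Ω)⁻¹) • N x := by
    intro α x hx
    have hxφ : x ∈ φ.maxGenEigenspace α := hEφ α (Module.End.mem_eigenspace_iff.mpr hx)
    obtain ⟨k, hk⟩ := (Module.End.mem_maxGenEigenspace _ _ _).mp hxφ
    set β : Ω := α * (q:Ω)⁻¹ with hβ
    have hBN : (φ - β • (1 : Module.End Ω V)) * N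
        = (q:Ω)⁻¹ • (N * (φ - α • (1 : Module.End Ω V))) := by
      have hφN : φ * N = (q:Ω)⁻¹ • (N * φ) := by
        rw [hrel, smul_smul, inv_mul_cancel₀ hq0, one_smul]
      rw [sub_mul, mul_sub, smul_sub, hφN]
      congr 1
      rw [smul_mul_assoc, one_mul, mul_smul_comm, mul_one, smul_smul, hβ, mul_comm]
    have hpow : ∀ m : ℕ, (φ - β • (1 : Module.End Ω V)) ^ m * N
        = ((q:Ω)⁻¹) ^ m • (N * (φ - α • (1 : Module.End Ω V)) ^ m) := by
      intro m
      induction m with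
      | zero => simp
      | succ m ih =>
        rw [pow_succ, mul_assoc, hBN, mul_smul_comm, ← mul_assoc, ih, smul_mul_assoc,
          smul_smul, mul_assoc, ← pow_succ, ← pow_succ']
    have hNx : N x ∈ φ.maxGenEigenspace β := by
      rw [Module.End.mem_maxGenEigenspace]
      refine ⟨k, ?_⟩
      have h2 := congrArg (fun f : Module.End Ω V => f x) (hpow k)
      simp only [Module.End.mul_apply, LinearMap.smul_apply] at h2
      rw [h2, hk, map_zero, smul_zero]
    exact Module.End.mem_eigenspace_iff.mp ((hmaxφ β) ▸ hNx)
  -- the commutation relation for `s`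
  have hrel' : N * s = (q : Ω) • (s * N) := by
    have hker : ∀ α : Ω, s.eigenspace α ≤ LinearMap.ker (N * s - (q:Ω) • (s * N)) := by
      intro α x hx
      have hx' := Module.End.mem_eigenspace_iff.mp hx
      rw [LinearMap.mem_ker]
      simp only [LinearMap.sub_apply, Module.End.mul_apply, LinearMap.smul_apply]
      rw [hx', map_smul, hNshift α x hx', smul_smul, sub_eq_zero]
      congr 1
      field_simp
    have hker' : LinearMap.ker (N * s - (q:Ω) • (s * N)) = ⊤ := by
      rw [← top_le_iff, ← hdiag]
      exact iSup_le hker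
    exact sub_eq_zero.mp (LinearMap.ker_eq_top.mp hker')
  refine ⟨hrel', fun k => ?_⟩
  simp only [WDPure, WDMixed, hw]
end

section
/- Let (φ, N) be a Weil–Deligne pair on a finite-dimensional Ω-vector space V with respect to the integer q ≥ 2, and let f ≥ 1 be an integer. Then (φ^f, N) is a Weil–Deligne pair with respect to q^f, and for every k ∈ ℚ the pair (φ, N) is pure of weight k with respect to q if and only if the pair (φ^f, N) is pure of weight k with respect to q^f. (A Weil–Deligne representation is pure if and only if its restriction to the Weil group of a finite extension is pure; part (2) of Lemma 1.2.) -/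
open Module

section Aux

open Polynomial

variable {Ω V : Type*} [Field Ω] [AddCommGroup V] [Module Ω V]

/-- A generalized eigenspace of `φ` is contained in the corresponding generalized
eigenspace of `φ ^ f`. -/
lemma maxGen_le_pow (φ : Module.End Ω V) (f : ℕ) (α : Ω) :
    φ.maxGenEigenspace α ≤ (φ ^ f).maxGenEigenspace (α ^ f) := by
  intro x hx
  rw [Module.End.mem_maxGenEigenspace] at hx ⊢
  obtain ⟨k, hk⟩ := hx
  obtain ⟨h, hh⟩ : (X - C α) ∣ (X ^ f - C (α ^ f)) := by
    refine dvd_iff_isRoot.mpr ?_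
    simp [IsRoot]
  refine ⟨k, ?_⟩
  have e1 : φ ^ f - (α ^ f) • (1 : Module.End Ω V) = aeval φ (X ^ f - C (α ^ f)) := by
    rw [map_sub, map_pow, aeval_X, aeval_C, Algebra.algebraMap_eq_smul_one]
  have e2 : φ - α • (1 : Module.End Ω V) = aeval φ (X - C α) := by
    rw [map_sub, aeval_X, aeval_C, Algebra.algebraMap_eq_smul_one]
  have hc : Commute ((aeval φ) (X - C α)) ((aeval φ) h) := (Commute.all _ _).map (aeval φ)
  rw [e1, hh, map_mul, hc.mul_pow, (hc.pow_pow k k).eq, Module.End.mul_apply, ← e2, hk,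
    map_zero]

/-- The generalized eigenspace of `φ ^ f` at `β` is the sum of the generalized eigenspaces
of `φ` at the `f`-th roots of `β`. -/
lemma maxGen_pow_eq [IsAlgClosed Ω] [FiniteDimensional Ω V] (φ : Module.End Ω V) (f : ℕ)
    (β : Ω) :
    (φ ^ f).maxGenEigenspace β = ⨆ α ∈ {α : Ω | α ^ f = β}, φ.maxGenEigenspace α := by
  set S : Ω → Submodule Ω V := fun γ => ⨆ α ∈ {α : Ω | α ^ f = γ}, φ.maxGenEigenspace α with hSdef
  have hS : ∀ γ, S γ ≤ (φ ^ f).maxGenEigenspace γ := by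
    intro γ
    refine iSup₂_le fun α hα => ?_
    rw [← hα]
    exact maxGen_le_pow φ f α
  refine le_antisymm ?_ (hS β)
  intro x hx
  have htop : (⨆ γ, S γ) = ⊤ := by
    refine le_antisymm le_top ?_
    rw [← φ.iSup_maxGenEigenspace_eq_top]
    refine iSup_le fun α => ?_
    exact le_trans (le_iSup₂ (f := fun (α' : Ω) (_ : α' ∈ {a : Ω | a ^ f = α ^ f}) => φ.maxGenEigenspace α') α rfl) (le_iSup S (α ^ f))
  have hx' : x ∈ S β ⊔ ⨆ γ ≠ β, S γ := by
    have hmem : x ∈ (⨆ γ, S γ) := htop ▸ Submodule.mem_top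
    rw [iSup_split_single S β] at hmem
    exact hmem
  obtain ⟨y, hy, z, hz, hxyz⟩ := Submodule.mem_sup.mp hx'
  have hz1 : z ∈ (φ ^ f).maxGenEigenspace β := by
    have hy' : y ∈ (φ ^ f).maxGenEigenspace β := hS β hy
    have : z = x - y := by rw [← hxyz]; abel
    rw [this]
    exact Submodule.sub_mem _ hx hy'
  have hz2 : z ∈ ⨆ γ ≠ β, (φ ^ f).maxGenEigenspace γ :=
    (iSup₂_mono fun γ _ => hS γ) hz
  have hdis := (φ ^ f).independent_maxGenEigenspace β
  have : z = 0 := (Submodule.disjoint_def.mp hdis) z hz1 hz2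
  rw [this, add_zero] at hxyz
  rw [← hxyz]; exact hy

/-- Being a Weil number is compatible with taking `f`-th powers. -/
lemma weil_pow_iff {Ω : Type*} [Field Ω] [CharZero Ω] (q f : ℕ) (hf : 1 ≤ f) (w : ℚ) (α : Ω) :
    IsWeilNumber q w α ↔ IsWeilNumber (q ^ f) w (α ^ f) := by
  have hq0 : (0:ℝ) ≤ (q:ℝ) := Nat.cast_nonneg q
  have key : ∀ σ : Ω →+* ℂ, (‖σ (α ^ f)‖) ^ 2 = ((‖σ α‖) ^ 2) ^ f := by
    intro σ; rw [map_pow, norm_pow]; ring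
  have hpow : ((q:ℝ) ^ (w:ℝ)) ^ f = ((q ^ f : ℕ) : ℝ) ^ (w:ℝ) := by
    push_cast
    rw [← Real.rpow_natCast ((q:ℝ) ^ (w:ℝ)) f, ← Real.rpow_natCast (q:ℝ) f,
      ← Real.rpow_mul hq0, ← Real.rpow_mul hq0, mul_comm]
  constructor
  · rintro ⟨halg, hn⟩
    refine ⟨isAlgebraic_iff_isIntegral.2 (halg.isIntegral.pow f), fun σ => ?_⟩
    rw [key, hn σ, hpow]
  · rintro ⟨halg, hn⟩
    refine ⟨isAlgebraic_iff_isIntegral.2 (IsIntegral.of_pow hf halg.isIntegral), fun σ => ?_⟩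
    have h1 : ((‖σ α‖) ^ 2) ^ f = ((q:ℝ) ^ (w:ℝ)) ^ f := by
      rw [← key, hn σ, hpow]
    have h2 : (0:ℝ) ≤ (‖σ α‖) ^ 2 := sq_nonneg _
    have h3 : (0:ℝ) ≤ (q:ℝ) ^ (w:ℝ) := Real.rpow_nonneg hq0 _
    exact pow_left_inj₀ h2 h3 (by omega : f ≠ 0) |>.mp h1

/-- The weight spaces of `φ ^ f` with respect to `q ^ f` coincide with those of `φ`
with respect to `q`. -/
lemma wdWeightSpace_pow_eq {Ω V : Type*} [Field Ω] [CharZero Ω] [IsAlgClosed Ω]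
    [AddCommGroup V] [Module Ω V] [FiniteDimensional Ω V]
    (q : ℕ) (φ : Module.End Ω V) (f : ℕ) (hf : 1 ≤ f) (w : ℚ) :
    wdWeightSpace (q ^ f) (φ ^ f) w = wdWeightSpace q φ w := by
  unfold wdWeightSpace
  refine le_antisymm ?_ ?_
  · refine iSup₂_le fun β hβ => ?_
    rw [maxGen_pow_eq φ f β]
    refine iSup₂_le fun α hα => ?_
    have hweil : IsWeilNumber q w α := by
      rw [weil_pow_iff q f hf w α, hα]
      exact hβ
    exact le_iSup₂ (f := fun (α' : Ω) (_ : α' ∈ {a : Ω | IsWeilNumber q w a}) =>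
      φ.maxGenEigenspace α') α hweil
  · refine iSup₂_le fun α hα => ?_
    have hweil : IsWeilNumber (q ^ f) w (α ^ f) := (weil_pow_iff q f hf w α).mp hα
    exact le_trans (maxGen_le_pow φ f α)
      (le_iSup₂ (f := fun (β : Ω) (_ : β ∈ {b : Ω | IsWeilNumber (q ^ f) w b}) =>
        (φ ^ f).maxGenEigenspace β) (α ^ f) hweil)

end Aux

/-- If `(φ, N)` is a Weil–Deligne pair with respect to `q` and `f ≥ 1`, then
`(φ^f, N)` is a Weil–Deligne pair with respect to `q^f`, and `(φ, N)` is pure of weight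
`k` with respect to `q` if and only if `(φ^f, N)` is pure of weight `k` with respect to
`q^f` (purity is invariant under restriction to the Weil group of a finite extension). -/
theorem statement5 {Ω V : Type*} [Field Ω] [CharZero Ω] [IsAlgClosed Ω]
    [AddCommGroup V] [Module Ω V] [FiniteDimensional Ω V]
    (q : ℕ) (hq : 2 ≤ q) (φ N : Module.End Ω V)
    (hφ : IsUnit φ) (hrel : N * φ = (q : Ω) • (φ * N))
    (f : ℕ) (hf : 1 ≤ f) :
    (IsUnit (φ ^ f) ∧ N * φ ^ f = ((q ^ f : ℕ) : Ω) • (φ ^ f * N)) ∧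
    ∀ k : ℚ, WDPure q φ N k ↔ WDPure (q ^ f) (φ ^ f) N k := by
  constructor
  · have key : ∀ m : ℕ, N * φ ^ m = ((q ^ m : ℕ) : Ω) • (φ ^ m * N) := by
      intro m
      induction m with
      | zero => simp
      | succ m ih =>
        rw [pow_succ, ← mul_assoc, ih, smul_mul_assoc, mul_assoc, hrel]
        push_cast
        rw [mul_smul_comm, smul_smul, pow_succ]
        rw [mul_assoc]
    exact ⟨hφ.pow f, key f⟩
  · intro k
    have hw : ∀ w : ℚ, wdWeightSpace (q ^ f) (φ ^ f) w = wdWeightSpace q φ w :=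
      wdWeightSpace_pow_eq q φ f hf
    unfold WDPure WDMixed
    simp only [hw]
end

section
/- Let φ be a diagonalizable invertible endomorphism of a finite-dimensional Ω-vector space V, let k ∈ ℚ, and let N, N′ be endomorphisms of V with N ∘ φ = q • (φ ∘ N) and N′ ∘ φ = q • (φ ∘ N′). If both (φ, N) and (φ, N′) are pure of weight k, then there exists an invertible endomorphism g of V with g ∘ φ = φ ∘ g and g ∘ N = N′ ∘ g. (Given a semisimple Frobenius, there is up to equivalence at most one monodromy operator making the representation pure; part (4) of Lemma 1.2.) -/
open Module

namespace Stmt6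

open Module Submodule

set_option linter.unusedSectionVars false

variable {Ω V : Type*} [Field Ω] [CharZero Ω] [AddCommGroup V] [Module Ω V]

/-! ### Weil number arithmetic -/

lemma weil_unique {q : ℕ} (hq : 2 ≤ q) (σ : Ω →+* ℂ) {w w' : ℚ} {α : Ω}
    (h : IsWeilNumber q w α) (h' : IsWeilNumber q w' α) : w = w' := by
  have h1 : (q : ℝ) ^ (w : ℝ) = (q : ℝ) ^ (w' : ℝ) := by rw [← h.2 σ, ← h'.2 σ]
  have hq1 : (1 : ℝ) < (q : ℝ) := by exact_mod_cast (by omega : 1 < q)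
  have h2 : (w : ℝ) = (w' : ℝ) := le_antisymm
    ((Real.rpow_le_rpow_left_iff hq1).mp h1.le) ((Real.rpow_le_rpow_left_iff hq1).mp h1.ge)
  exact_mod_cast h2

lemma weil_zpow {q : ℕ} (hq : 2 ≤ q) {w : ℚ} {α : Ω} (h : IsWeilNumber q w α) (z : ℤ) :
    IsWeilNumber q (w + 2 * z) ((q : Ω) ^ z * α) := by
  have hq0 : (0 : ℝ) < (q : ℝ) := by exact_mod_cast (by omega : 0 < q)
  constructor
  · have h1 : IsIntegral ℚ ((q : Ω) ^ z) := by
      have hrw : (q : Ω) ^ z = algebraMap ℚ Ω ((q : ℚ) ^ z) := by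
        rw [map_zpow₀, map_natCast]
      rw [hrw]; exact isIntegral_algebraMap
    exact isAlgebraic_iff_isIntegral.mpr (h1.mul (isAlgebraic_iff_isIntegral.mp h.1))
  · intro σ
    have habs : ‖σ ((q : Ω) ^ z * α)‖ = (q : ℝ) ^ z * ‖σ α‖ := by
      rw [map_mul, norm_mul, map_zpow₀, map_natCast, norm_zpow, Complex.norm_natCast]
    rw [habs, mul_pow, h.2 σ]
    rw [show ((w + 2 * z : ℚ) : ℝ) = (w : ℝ) + ((2 * z : ℤ) : ℝ) by push_cast; ring]
    rw [Real.rpow_add hq0, Real.rpow_intCast]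
    rw [show (2 * z : ℤ) = z * 2 by ring, zpow_mul]
    rw [show ((2 : ℤ) : ℤ) = ((2 : ℕ) : ℤ) by norm_num, zpow_natCast]
    ring

lemma weil_mul {q : ℕ} (hq : 2 ≤ q) {w : ℚ} {α : Ω} (h : IsWeilNumber q w α) :
    IsWeilNumber q (w + 2) ((q : Ω) * α) := by
  have := weil_zpow hq h 1
  rw [zpow_one] at this
  have h2 : (w + 2 : ℚ) = w + 2 * ((1 : ℤ) : ℚ) := by norm_num
  rw [h2]; exact this

lemma weil_mul_pow {q : ℕ} (hq : 2 ≤ q) {w : ℚ} {α : Ω} (h : IsWeilNumber q w α) (j : ℕ) :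
    IsWeilNumber q (w + 2 * j) ((q : Ω) ^ j * α) := by
  have := weil_zpow hq h (j : ℤ)
  rw [zpow_natCast] at this
  have h2 : (w + 2 * (j : ℚ)) = w + 2 * ((j : ℤ) : ℚ) := by push_cast; ring
  rw [h2]; exact this

lemma weil_inv_pow {q : ℕ} (hq : 2 ≤ q) {w : ℚ} {α : Ω} (h : IsWeilNumber q w α) (j : ℕ) :
    IsWeilNumber q (w - 2 * j) (((q : Ω)⁻¹) ^ j * α) := by
  have := weil_zpow hq h (-(j : ℤ))
  rw [zpow_neg, zpow_natCast, ← inv_pow] at this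
  have h2 : (w - 2 * (j : ℚ)) = w + 2 * ((-(j : ℤ)) : ℚ) := by push_cast; ring
  rw [h2]; exact this

/-! ### Eigenspace generalities -/

lemma eig_sum_zero (φ : Module.End Ω V) {ι : Type*} (e : ι → Ω) (s : Finset ι)
    (he : Set.InjOn e s) (u : ι → V) (hu : ∀ i ∈ s, u i ∈ φ.eigenspace (e i))
    (h : ∑ i ∈ s, u i = 0) : ∀ i ∈ s, u i = 0 := by
  classical
  intro i₀ hi₀
  have hd := iSupIndep_def.mp φ.eigenspaces_iSupIndep (e i₀)
  have hsum : u i₀ + ∑ i ∈ s.erase i₀, u i = 0 := by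
    rw [Finset.add_sum_erase _ _ hi₀]; exact h
  have hmem : ∑ i ∈ s.erase i₀, u i ∈ ⨆ j, ⨆ (_ : j ≠ e i₀), φ.eigenspace j := by
    refine Submodule.sum_mem _ fun i hi => ?_
    have hne : e i ≠ e i₀ := fun hEq =>
      (Finset.mem_erase.mp hi).1 (he (Finset.mem_of_mem_erase hi) hi₀ hEq)
    exact Submodule.mem_iSup_of_mem (e i)
      (Submodule.mem_iSup_of_mem hne (hu i (Finset.mem_of_mem_erase hi)))
  have h2 : u i₀ = -∑ i ∈ s.erase i₀, u i := eq_neg_of_add_eq_zero_left hsum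
  have h3 : u i₀ ∈ φ.eigenspace (e i₀) ⊓ ⨆ j, ⨆ (_ : j ≠ e i₀), φ.eigenspace j :=
    ⟨hu i₀ hi₀, by rw [h2]; exact neg_mem hmem⟩
  simpa using hd.le_bot h3

lemma eig_extract (φ : Module.End Ω V) {ι : Type*} (C : ι → Submodule Ω V) (e : ι → Ω)
    (he : Function.Injective e) (hC : ∀ i, C i ≤ φ.eigenspace (e i)) (i₀ : ι) {y : V}
    (hy : y ∈ ⨆ i, C i) (hy0 : y ∈ φ.eigenspace (e i₀)) : y ∈ C i₀ := by
  classical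
  obtain ⟨f, hf, hsum⟩ := (Submodule.mem_iSup_iff_exists_finsupp _ _).mp hy
  set s : Finset ι := insert i₀ f.support with hs
  have hfy : ∑ i ∈ s, f i = y := by
    rw [hs, Finset.sum_insert_of_eq_zero_if_notMem (fun h => Finsupp.notMem_support_iff.mp h)]
    exact hsum
  set u : ι → V := fun i => if i = i₀ then f i₀ - y else f i with hu
  have husum : ∑ i ∈ s, u i = 0 := by
    have : ∑ i ∈ s, u i = (∑ i ∈ s, f i) - y := by
      have h1 : u i₀ = f i₀ - y := by simp [hu]
      have h2 : ∀ i ∈ s.erase i₀, u i = f i := fun i hi => by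
        simp [hu, (Finset.mem_erase.mp hi).1]
      rw [← Finset.add_sum_erase _ u (Finset.mem_insert_self i₀ _), h1,
          Finset.sum_congr rfl h2, ← Finset.add_sum_erase _ f (Finset.mem_insert_self i₀ _)]
      abel
    rw [this, hfy, sub_self]
  have hmem : ∀ i ∈ s, u i ∈ φ.eigenspace (e i) := by
    intro i hi
    by_cases hii : i = i₀
    · subst hii
      simp only [hu, if_pos rfl]
      exact sub_mem (hC i (hf i)) hy0
    · simp only [hu, if_neg hii]
      exact hC i (hf i)
  have h4 := eig_sum_zero φ e s (he.injOn) u hmem husum i₀ (Finset.mem_insert_self i₀ _)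
  have h0 : f i₀ - y = 0 := by simpa [hu] using h4
  have hy' : y = f i₀ := (sub_eq_zero.mp h0).symm
  rw [hy']; exact hf i₀

lemma maxgen_eq (φ : Module.End Ω V) (hdiag : (⨆ α : Ω, φ.eigenspace α) = ⊤) (β : Ω) :
    φ.maxGenEigenspace β = φ.eigenspace β := by
  classical
  refine le_antisymm ?_ ((φ.genEigenspace β).monotone le_top)
  intro x hx
  obtain ⟨n, hn⟩ := (φ.mem_maxGenEigenspace β x).mp hx
  have hx' : x ∈ ⨆ α : Ω, φ.eigenspace α := hdiag ▸ Submodule.mem_top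
  obtain ⟨f, hf, hsum⟩ := (Submodule.mem_iSup_iff_exists_finsupp _ _).mp hx'
  have key : ∀ γ : Ω, ((φ - β • 1) ^ n) (f γ) = (γ - β) ^ n • f γ := by
    intro γ
    have hstep : (φ - β • 1) (f γ) = (γ - β) • f γ := by
      have hγ := Module.End.mem_eigenspace_iff.mp (hf γ)
      simp [LinearMap.sub_apply, hγ, sub_smul]
    clear hn
    induction n with
    | zero => simp
    | succ n ih =>
      rw [pow_succ, Module.End.mul_apply, hstep, map_smul, ih, smul_smul, mul_comm, ← pow_succ]
  have hzero : ∑ γ ∈ f.support, (γ - β) ^ n • f γ = 0 := by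
    have : ((φ - β • 1) ^ n) x = 0 := hn
    rw [← hsum] at this
    rw [Finsupp.sum, map_sum] at this
    simpa [key] using this
  have hall := eig_sum_zero φ id f.support (Set.injOn_id _)
    (fun γ => (γ - β) ^ n • f γ)
    (fun γ _ => Submodule.smul_mem _ _ (hf γ)) hzero
  have hsupp : ∀ γ ∈ f.support, f γ ∈ φ.eigenspace β := by
    intro γ hγ
    by_cases hγβ : γ = β
    · subst hγβ; exact hf γ
    · exfalso
      have := hall γ hγ
      have hne : (γ - β) ^ n ≠ 0 := pow_ne_zero _ (sub_ne_zero.mpr hγβ)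
      have : f γ = 0 := by
        rcases smul_eq_zero.mp this with h | h
        · exact absurd h hne
        · exact h
      exact Finsupp.mem_support_iff.mp hγ this
  rw [← hsum]
  exact Submodule.sum_mem _ hsupp

lemma U_eq (q : ℕ) (φ : Module.End Ω V) (hdiag : (⨆ α : Ω, φ.eigenspace α) = ⊤) (w : ℚ) :
    wdWeightSpace q φ w = ⨆ α ∈ {α : Ω | IsWeilNumber q w α}, φ.eigenspace α := by
  unfold wdWeightSpace
  exact iSup_congr fun α => iSup_congr fun _ => maxgen_eq φ hdiag α

lemma eig_le_U {q : ℕ} {φ : Module.End Ω V} {w : ℚ} {α : Ω} (h : IsWeilNumber q w α) :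
    φ.eigenspace α ≤ wdWeightSpace q φ w := by
  refine le_trans ((φ.genEigenspace α).monotone le_top) ?_
  exact le_iSup_of_le α (le_iSup_of_le h le_rfl)

lemma N_eig {q : ℕ} (hq0 : (q : Ω) ≠ 0) {φ N : Module.End Ω V}
    (hrel : N * φ = (q : Ω) • (φ * N)) {α : Ω} {x : V} (hx : x ∈ φ.eigenspace α) :
    N x ∈ φ.eigenspace ((q : Ω)⁻¹ * α) := by
  rw [Module.End.mem_eigenspace_iff] at hx ⊢
  have h1 : N (φ x) = (q : Ω) • φ (N x) := by
    have h2 := congrArg (fun f : Module.End Ω V => f x) hrel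
    simpa [Module.End.mul_apply] using h2
  have h3 : α • N x = (q : Ω) • φ (N x) := by
    rw [← h1, hx, map_smul]
  have h2 : φ (N x) = (q : Ω)⁻¹ • (α • N x) := by
    rw [h3, smul_smul, inv_mul_cancel₀ hq0, one_smul]
  rw [h2, smul_smul]

lemma Npow_eig {q : ℕ} (hq0 : (q : Ω) ≠ 0) {φ N : Module.End Ω V}
    (hrel : N * φ = (q : Ω) • (φ * N)) {α : Ω} {x : V} (hx : x ∈ φ.eigenspace α) (j : ℕ) :
    (N ^ j) x ∈ φ.eigenspace (((q : Ω)⁻¹) ^ j * α) := by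
  induction j with
  | zero => simpa using hx
  | succ j ih =>
    have h2 := N_eig hq0 hrel ih
    have h3 : (N ^ (j + 1)) x = N ((N ^ j) x) := by rw [pow_succ']; rfl
    have h4 : ((q : Ω)⁻¹) ^ (j + 1) * α = (q : Ω)⁻¹ * (((q : Ω)⁻¹) ^ j * α) := by
      rw [pow_succ']; ring
    rw [h3, h4]; exact h2

/-! ### generic helpers -/

lemma isupindep_of_sums {ι : Type*} (C : ι → Submodule Ω V)
    (H : ∀ (s : Finset ι) (x : ι → V), (∀ i ∈ s, x i ∈ C i) → ∑ i ∈ s, x i = 0 →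
      ∀ i ∈ s, x i = 0) : iSupIndep C := by
  classical
  rw [iSupIndep_def]
  intro i₀
  rw [Submodule.disjoint_def]
  intro z hz1 hz2
  rw [show (⨆ j, ⨆ (_ : j ≠ i₀), C j) = ⨆ j : {j // j ≠ i₀}, C j by rw [iSup_subtype]] at hz2
  obtain ⟨f, hf, hsum⟩ := (Submodule.mem_iSup_iff_exists_finsupp _ _).mp hz2
  set s : Finset ι := insert i₀ (f.support.image Subtype.val) with hs
  set u : ι → V := fun i =>
    if h : i = i₀ then -z else if h2 : i ≠ i₀ then f ⟨i, h2⟩ else 0 with hu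
  have hui₀ : u i₀ = -z := by simp [hu]
  have husum : ∑ i ∈ s, u i = 0 := by
    rw [hs, Finset.sum_insert (by simp), hui₀]
    have himg : ∑ i ∈ f.support.image Subtype.val, u i = ∑ j ∈ f.support, f j := by
      rw [Finset.sum_image (fun a _ b _ h => Subtype.ext h)]
      refine Finset.sum_congr rfl fun j hj => ?_
      simp [hu, j.2]
    rw [himg]
    have hz : (∑ j ∈ f.support, (f j : V)) = z := hsum
    rw [hz]; abel
  have := H s u ?memh husum i₀ (Finset.mem_insert_self _ _)
  · rw [hui₀] at this
    simpa using this
  · intro i hi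
    by_cases hii : i = i₀
    · subst hii; rw [hui₀]; exact neg_mem hz1
    · have : u i = f ⟨i, hii⟩ := by simp [hu, hii]
      rw [this]; simpa using hf ⟨i, hii⟩

/-- restriction of an endomorphism to an equivalence `p ≃ p.map f`, given injectivity on `p`. -/
noncomputable def mapEquiv (f : Module.End Ω V) (p : Submodule Ω V)
    (hinj : ∀ x ∈ p, f x = 0 → x = 0) : p ≃ₗ[Ω] p.map f :=
  LinearEquiv.ofBijective (f.restrict fun x hx => Submodule.mem_map_of_mem hx)
    ⟨by rintro ⟨x, hx⟩ ⟨y, hy⟩ hxy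
        have : f x = f y := congrArg Subtype.val hxy
        have : f (x - y) = 0 := by rw [map_sub, this, sub_self]
        have := hinj (x - y) (sub_mem hx hy) this
        exact Subtype.ext (sub_eq_zero.mp this) ,
     by rintro ⟨y, hy⟩
        obtain ⟨x, hx, rfl⟩ := hy
        exact ⟨⟨x, hx⟩, rfl⟩⟩

/-! ### the weight function and primitive subspaces -/

open scoped Classical in
noncomputable def wt (q : ℕ) (k : ℚ) (α : Ω) : ℤ :=
  if h : ∃ i : ℤ, IsWeilNumber q (k + i) α then h.choose else 0

lemma wt_spec {q : ℕ} {k : ℚ} {α : Ω} (h : ∃ i : ℤ, IsWeilNumber q (k + i) α) :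
    IsWeilNumber q (k + wt q k α) α := by
  classical
  rw [wt]
  rw [dif_pos h]
  exact h.choose_spec

lemma wt_eq {q : ℕ} (hq : 2 ≤ q) (σ : Ω →+* ℂ) {k : ℚ} {i : ℤ} {α : Ω}
    (h : IsWeilNumber q (k + i) α) : wt q k α = i := by
  have h2 := wt_spec (α := α) ⟨i, h⟩
  have h3 := weil_unique hq σ h2 h
  have : (wt q k α : ℚ) = i := by linarith
  exact_mod_cast this

noncomputable def Psub (q : ℕ) (φ N : Module.End Ω V) (k : ℚ) (β : Ω) : Submodule Ω V :=
  LinearMap.ker (N ^ (wt q k β + 1).toNat) ⊓ φ.eigenspace β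

noncomputable def Bsub (q : ℕ) (φ N : Module.End Ω V) (k : ℚ) (p : ℕ × Ω) : Submodule Ω V :=
  Submodule.map (N ^ p.1) (Psub q φ N k p.2)

lemma P_le {q : ℕ} {φ N : Module.End Ω V} {k : ℚ} {β : Ω} :
    Psub q φ N k β ≤ φ.eigenspace β := inf_le_right

lemma B_le {q : ℕ} (hq0 : (q : Ω) ≠ 0) {φ N : Module.End Ω V}
    (hrel : N * φ = (q : Ω) • (φ * N)) {k : ℚ} (j : ℕ) (β : Ω) :
    Bsub q φ N k (j, β) ≤ φ.eigenspace (((q : Ω)⁻¹) ^ j * β) := by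
  rintro x ⟨y, hy, rfl⟩
  exact Npow_eig hq0 hrel (P_le hy) j

lemma B_bot {q : ℕ} {φ N : Module.End Ω V} {k : ℚ} {j : ℕ} {β : Ω}
    (hj : wt q k β + 1 ≤ (j : ℤ)) : Bsub q φ N k (j, β) = ⊥ := by
  rw [eq_bot_iff]
  rintro x ⟨y, hy, rfl⟩
  have hk : (N ^ (wt q k β + 1).toNat) y = 0 := hy.1
  have ht : (wt q k β + 1).toNat ≤ j := Int.toNat_le.mpr hj
  have h0 : (N ^ j) y = 0 := by
    rw [← Nat.sub_add_cancel ht, pow_add, Module.End.mul_apply, hk, map_zero]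
  simp [h0]


lemma mem_Psub {q : ℕ} {k : ℚ} {φ N : Module.End Ω V} {β : Ω} {x : V} :
    x ∈ Psub q φ N k β ↔ (N ^ (wt q k β + 1).toNat) x = 0 ∧ x ∈ φ.eigenspace β := Iff.rfl

lemma biSup_subtype' {S : Set Ω} (f : Ω → Submodule Ω V) :
    (⨆ β ∈ S, f β) = ⨆ i : S, f i.1 :=
  le_antisymm (iSup₂_le fun β hβ => le_iSup_of_le ⟨β, hβ⟩ le_rfl)
    (iSup_le fun i => le_iSup_of_le i.1 (le_iSup_of_le i.2 le_rfl))

section Main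

variable [FiniteDimensional Ω V]
variable {q : ℕ} {φ : Module.End Ω V} {k : ℚ} {N : Module.End Ω V}

lemma exists_wt (hdiag : (⨆ α : Ω, φ.eigenspace α) = ⊤) (hp : WDPure q φ N k)
    {α : Ω} (hα : φ.eigenspace α ≠ ⊥) : ∃ i : ℤ, IsWeilNumber q (k + i) α := by
  by_cases hw : ∃ w : ℚ, IsWeilNumber q w α
  · obtain ⟨w, hw⟩ := hw
    by_cases hki : ∃ i : ℤ, w = k + i
    · obtain ⟨i, rfl⟩ := hki
      exact ⟨i, hw⟩
    · exfalso
      have h1 := eig_le_U (φ := φ) hw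
      rw [hp.2.1 w hki] at h1
      exact hα (le_bot_iff.mp h1)
  · push_neg at hw
    exfalso
    have htop : (⊤ : Submodule Ω V) ≤ ⨆ β, ⨆ (_ : β ≠ α), φ.eigenspace β := by
      rw [← hp.1.submodule_iSup_eq_top]
      refine iSup_le fun w => ?_
      rw [U_eq q φ hdiag w]
      refine iSup_le fun β => iSup_le fun hβ => ?_
      have hne : β ≠ α := fun h => hw w (h ▸ hβ)
      exact le_iSup_of_le β (le_iSup_of_le hne le_rfl)
    have hd := iSupIndep_def.mp φ.eigenspaces_iSupIndep α
    refine hα ((Submodule.eq_bot_iff _).mpr fun x hx => ?_)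
    simpa using hd.le_bot ⟨hx, htop Submodule.mem_top⟩

lemma chain_inj (hp : WDPure q φ N k) {m : ℤ} (hm : 0 ≤ m) {α : Ω}
    (hα : IsWeilNumber q (k + m) α) :
    ∀ x ∈ φ.eigenspace α, (N ^ m.toNat) x = 0 → x = 0 := by
  intro x hx hNx
  rcases eq_or_lt_of_le hm with h0 | h1
  · rw [← h0] at hNx
    simpa using hNx
  · exact (hp.2.2 m (by omega)).1 x (eig_le_U hα hx) hNx

lemma chain_surj (hq : 2 ≤ q) (hdiag : (⨆ α : Ω, φ.eigenspace α) = ⊤)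
    (hrel : N * φ = (q : Ω) • (φ * N)) (hp : WDPure q φ N k) {m : ℤ} (hm : 1 ≤ m) {α : Ω}
    (hα : IsWeilNumber q (k + m) α) :
    ∀ y ∈ φ.eigenspace (((q : Ω)⁻¹) ^ m.toNat * α),
      ∃ x ∈ φ.eigenspace α, (N ^ m.toNat) x = y := by
  intro y hy
  have hq0 : (q : Ω) ≠ 0 := Nat.cast_ne_zero.mpr (by omega)
  have hwy : IsWeilNumber q (k - m) (((q : Ω)⁻¹) ^ m.toNat * α) := by
    have h1 := weil_inv_pow hq hα m.toNat
    have h2 : (k + (m : ℚ)) - 2 * (m.toNat : ℚ) = k - m := by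
      have h3 : ((m.toNat : ℤ) : ℚ) = (m : ℚ) := by
        exact_mod_cast congrArg (Int.cast : ℤ → ℚ) (Int.toNat_of_nonneg (by omega))
      push_cast at h3 ⊢
      linarith
    rwa [h2] at h1
  have hyU : y ∈ wdWeightSpace q φ (k - m) := eig_le_U hwy hy
  rw [← (hp.2.2 m hm).2, U_eq q φ hdiag,
    biSup_subtype' (S := {β : Ω | IsWeilNumber q (k + (m : ℚ)) β}) φ.eigenspace,
    Submodule.map_iSup] at hyU
  have hres := eig_extract φ
    (fun i : {β : Ω | IsWeilNumber q (k + (m : ℚ)) β} =>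
      Submodule.map (N ^ m.toNat) (φ.eigenspace i.1))
    (fun i => ((q : Ω)⁻¹) ^ m.toNat * i.1)
    (fun i i' hii' => Subtype.ext
      (mul_left_cancel₀ (pow_ne_zero _ (inv_ne_zero hq0)) hii'))
    (fun i => by
      rintro x ⟨z, hz, rfl⟩
      exact Npow_eig hq0 hrel hz m.toNat)
    ⟨α, hα⟩ hyU hy
  obtain ⟨x, hx, hxy⟩ := hres
  exact ⟨x, hx, hxy⟩

lemma P_inj (hq : 2 ≤ q) (σ : Ω →+* ℂ) (hdiag : (⨆ α : Ω, φ.eigenspace α) = ⊤)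
    (hp : WDPure q φ N k) {β : Ω} {j : ℕ} (hj : (j : ℤ) ≤ wt q k β) :
    ∀ x ∈ Psub q φ N k β, (N ^ j) x = 0 → x = 0 := by
  intro x hx hNx
  by_cases hb : φ.eigenspace β = ⊥
  · have h1 := P_le (q := q) (N := N) (k := k) hx
    rw [hb] at h1; simpa using h1
  · obtain ⟨i, hi⟩ := exists_wt hdiag hp hb
    have hwt : wt q k β = i := wt_eq hq σ hi
    have h0 : (0 : ℤ) ≤ wt q k β := le_trans (Int.ofNat_nonneg j) hj
    have hle : j ≤ (wt q k β).toNat := by omega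
    have hNx2 : (N ^ (wt q k β).toNat) x = 0 := by
      rw [← Nat.sub_add_cancel hle, pow_add, Module.End.mul_apply, hNx, map_zero]
    rw [← hwt] at hi
    exact chain_inj hp h0 hi x (P_le hx) hNx2

lemma decomp (hq : 2 ≤ q) (hdiag : (⨆ α : Ω, φ.eigenspace α) = ⊤)
    (hrel : N * φ = (q : Ω) • (φ * N)) (hp : WDPure q φ N k) {α : Ω}
    (hα : IsWeilNumber q (k + wt q k α) α) :
    φ.eigenspace α = Psub q φ N k α ⊔ Submodule.map N (φ.eigenspace ((q : Ω) * α)) := by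
  have hq0 : (q : Ω) ≠ 0 := Nat.cast_ne_zero.mpr (by omega)
  set m := wt q k α with hm
  refine le_antisymm ?_ (sup_le P_le ?_)
  swap
  · rintro x ⟨y, hy, rfl⟩
    have h1 := N_eig hq0 hrel hy
    rwa [← mul_assoc, inv_mul_cancel₀ hq0, one_mul] at h1
  intro x hx
  rcases lt_or_ge m 0 with hneg | hpos
  · set l : ℕ := (-m).toNat with hl
    have hl1 : 1 ≤ l := by omega
    have hα' : IsWeilNumber q (k + (-m : ℤ)) ((q : Ω) ^ l * α) := by
      have h1 := weil_mul_pow hq hα l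
      have h2 : (k + (m : ℚ)) + 2 * (l : ℚ) = k + ((-m : ℤ) : ℚ) := by
        have h3 : ((l : ℤ) : ℚ) = ((-m : ℤ) : ℚ) := by
          exact_mod_cast congrArg (Int.cast : ℤ → ℚ) (by omega : ((l : ℕ) : ℤ) = -m)
        push_cast at h3 ⊢
        linarith
      rwa [h2] at h1
    have hxeig : x ∈ φ.eigenspace (((q : Ω)⁻¹) ^ (-m).toNat * ((q : Ω) ^ l * α)) := by
      have he : ((q : Ω)⁻¹) ^ (-m).toNat * ((q : Ω) ^ l * α) = α := by
        rw [← mul_assoc, inv_pow, inv_mul_cancel₀ (pow_ne_zero _ hq0), one_mul]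
      rw [he]; exact hx
    obtain ⟨z, hz, hzx⟩ := chain_surj hq hdiag hrel hp (by omega : 1 ≤ -m) hα' x hxeig
    refine Submodule.mem_sup_right ?_
    have hz' : (N ^ (l - 1)) z ∈ φ.eigenspace ((q : Ω) * α) := by
      have h1 := Npow_eig hq0 hrel hz (l - 1)
      have he2 : ((q : Ω)⁻¹) ^ (l - 1) * ((q : Ω) ^ l * α) = (q : Ω) * α := by
        rw [show l = (l - 1) + 1 by omega]
        rw [pow_succ, inv_pow, show l - 1 + 1 - 1 = l - 1 by omega]
        field_simp
      rwa [he2] at h1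
    refine ⟨(N ^ (l - 1)) z, hz', ?_⟩
    rw [← Module.End.mul_apply, ← pow_succ']
    rw [show (l - 1) + 1 = l by omega]
    exact hzx
  · have hα2 : IsWeilNumber q (k + (m + 2 : ℤ)) ((q : Ω) * α) := by
      have h1 := weil_mul hq hα
      have h2 : (k + (m : ℚ)) + 2 = k + ((m + 2 : ℤ) : ℚ) := by push_cast; ring
      rwa [h2] at h1
    have hNx : (N ^ (m.toNat + 1)) x
        ∈ φ.eigenspace (((q : Ω)⁻¹) ^ ((m + 2).toNat) * ((q : Ω) * α)) := by
      have h1 := Npow_eig hq0 hrel hx (m.toNat + 1)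
      have he : ((q : Ω)⁻¹) ^ ((m + 2).toNat) * ((q : Ω) * α)
          = ((q : Ω)⁻¹) ^ (m.toNat + 1) * α := by
        rw [show (m + 2).toNat = (m.toNat + 1) + 1 by omega, pow_succ]
        field_simp
      rw [he]; exact h1
    obtain ⟨z, hz, hzN⟩ := chain_surj hq hdiag hrel hp (by omega : 1 ≤ m + 2) hα2 _ hNx
    have hNz : N z ∈ φ.eigenspace α := by
      have h1 := N_eig hq0 hrel hz
      rwa [← mul_assoc, inv_mul_cancel₀ hq0, one_mul] at h1
    have hker : (N ^ (m + 1).toNat) (x - N z) = 0 := by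
      rw [show (m + 1).toNat = m.toNat + 1 by omega, map_sub]
      have h1 : (N ^ (m.toNat + 1)) (N z) = (N ^ ((m + 2).toNat)) z := by
        rw [show (m + 2).toNat = m.toNat + 1 + 1 by omega]
        conv_rhs => rw [pow_succ]
        rfl
      rw [h1, hzN, sub_self]
    refine Submodule.mem_sup.mpr ⟨x - N z, ?_, N z, Submodule.mem_map_of_mem hz, by abel⟩
    exact mem_Psub.mpr ⟨hker, sub_mem hx hNz⟩

lemma decomp_disjoint (hp : WDPure q φ N k) {α : Ω}
    (hα2 : IsWeilNumber q (k + (wt q k α + 2 : ℤ)) ((q : Ω) * α)) (h0 : 0 ≤ wt q k α) :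
    Disjoint (Psub q φ N k α) (Submodule.map N (φ.eigenspace ((q : Ω) * α))) := by
  rw [Submodule.disjoint_def]
  intro z hz1 hz2
  obtain ⟨y, hy, rfl⟩ := hz2
  have hk : (N ^ (wt q k α + 1).toNat) (N y) = 0 := (mem_Psub.mp hz1).1
  have h2 : (N ^ (wt q k α + 2).toNat) y = 0 := by
    rw [show (wt q k α + 2).toNat = (wt q k α + 1).toNat + 1 by omega, pow_succ,
      Module.End.mul_apply]
    exact hk
  have h3 := chain_inj hp (by omega : (0:ℤ) ≤ wt q k α + 2) hα2 y hy h2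
  rw [h3, map_zero]

lemma N_inj_on_up (hp : WDPure q φ N k) {α : Ω}
    (hα2 : IsWeilNumber q (k + (wt q k α + 2 : ℤ)) ((q : Ω) * α)) (h0 : 0 ≤ wt q k α) :
    ∀ y ∈ φ.eigenspace ((q : Ω) * α), N y = 0 → y = 0 := by
  intro y hy hNy
  have h2 : (N ^ (wt q k α + 2).toNat) y = 0 := by
    rw [show (wt q k α + 2).toNat = (wt q k α + 1).toNat + 1 by omega, pow_succ,
      Module.End.mul_apply, hNy, map_zero]
  exact chain_inj hp (by omega : (0:ℤ) ≤ wt q k α + 2) hα2 y hy h2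

lemma weil_step_up (hq : 2 ≤ q) {α : Ω} (hα : IsWeilNumber q (k + wt q k α) α) :
    IsWeilNumber q (k + (wt q k α + 2 : ℤ)) ((q : Ω) * α) := by
  have h1 := weil_mul hq hα
  have h2 : (k + (wt q k α : ℚ)) + 2 = k + ((wt q k α + 2 : ℤ) : ℚ) := by push_cast; ring
  rwa [h2] at h1

lemma finrank_P (hq : 2 ≤ q) (hdiag : (⨆ α : Ω, φ.eigenspace α) = ⊤)
    (hrel : N * φ = (q : Ω) • (φ * N)) (hp : WDPure q φ N k) {α : Ω}
    (hα : IsWeilNumber q (k + wt q k α) α) (h0 : 0 ≤ wt q k α) :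
    finrank Ω (φ.eigenspace α)
      = finrank Ω (Psub q φ N k α) + finrank Ω (φ.eigenspace ((q : Ω) * α)) := by
  have hα2 := weil_step_up hq hα
  have hNinj := N_inj_on_up hp hα2 h0
  have hmap : finrank Ω (Submodule.map N (φ.eigenspace ((q : Ω) * α)))
      = finrank Ω (φ.eigenspace ((q : Ω) * α)) :=
    (LinearEquiv.finrank_eq (mapEquiv N _ hNinj)).symm
  have hdisj := decomp_disjoint hp hα2 h0
  have hsum := Submodule.finrank_sup_add_finrank_inf_eq (Psub q φ N k α)
    (Submodule.map N (φ.eigenspace ((q : Ω) * α)))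
  rw [hdisj.eq_bot, finrank_bot] at hsum
  rw [decomp hq hdiag hrel hp hα]
  omega

lemma span_chain (hq : 2 ≤ q) (σ : Ω →+* ℂ) (hdiag : (⨆ α : Ω, φ.eigenspace α) = ⊤)
    (hrel : N * φ = (q : Ω) • (φ * N)) (hp : WDPure q φ N k) :
    ∀ (n : ℕ) (α : Ω), φ.eigenspace ((q : Ω) ^ n * α) = ⊥ →
      φ.eigenspace α ≤ ⨆ p : ℕ × Ω, Bsub q φ N k p := by
  intro n
  induction n with
  | zero =>
    intro α h
    rw [pow_zero, one_mul] at h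
    rw [h]; exact bot_le
  | succ n ih =>
    intro α h
    by_cases hb : φ.eigenspace α = ⊥
    · rw [hb]; exact bot_le
    · obtain ⟨i, hi⟩ := exists_wt hdiag hp hb
      have hwt : wt q k α = i := wt_eq hq σ hi
      have hα : IsWeilNumber q (k + wt q k α) α := by rw [hwt]; exact hi
      rw [decomp hq hdiag hrel hp hα]
      refine sup_le ?_ ?_
      · have hPB : Psub q φ N k α = Bsub q φ N k (0, α) := by
          rw [Bsub]
          simp only [pow_zero]
          rw [Module.End.one_eq_id, Submodule.map_id]
        rw [hPB]; exact le_iSup _ (0, α)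
      · have hih := ih ((q : Ω) * α) (by
          have he : (q : Ω) ^ n * ((q : Ω) * α) = (q : Ω) ^ (n + 1) * α := by
            rw [pow_succ]; ring
          rw [he]; exact h)
        calc Submodule.map N (φ.eigenspace ((q : Ω) * α))
            ≤ Submodule.map N (⨆ p, Bsub q φ N k p) := Submodule.map_mono hih
          _ = ⨆ p, Submodule.map N (Bsub q φ N k p) := Submodule.map_iSup _ _
          _ ≤ ⨆ p, Bsub q φ N k p := by
              refine iSup_le fun p => ?_
              have hBB : Submodule.map N (Bsub q φ N k p) = Bsub q φ N k (p.1 + 1, p.2) := by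
                rw [Bsub, Bsub, ← Submodule.map_comp, ← Module.End.mul_eq_comp, ← pow_succ']
              rw [hBB]; exact le_iSup _ _

lemma span_top (hq : 2 ≤ q) (σ : Ω →+* ℂ) (hφ : IsUnit φ)
    (hdiag : (⨆ α : Ω, φ.eigenspace α) = ⊤)
    (hrel : N * φ = (q : Ω) • (φ * N)) (hp : WDPure q φ N k) :
    (⨆ p : ℕ × Ω, Bsub q φ N k p) = ⊤ := by
  rw [eq_top_iff, ← hdiag]
  refine iSup_le fun α => ?_
  by_cases h0 : α = 0
  · subst h0
    have hz : φ.eigenspace (0 : Ω) = ⊥ := by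
      rw [Module.End.eigenspace_zero]
      exact LinearMap.ker_eq_bot.mpr ((Module.End.isUnit_iff φ).mp hφ).injective
    rw [hz]; exact bot_le
  · have hex : ∃ n : ℕ, φ.eigenspace ((q : Ω) ^ n * α) = ⊥ := by
      by_contra hc
      push_neg at hc
      have hinj : Function.Injective fun n : ℕ => (q : Ω) ^ n * α := by
        intro a b hab
        have h1 : (q : Ω) ^ a = (q : Ω) ^ b := mul_right_cancel₀ h0 hab
        have h2 : ((q ^ a : ℕ) : Ω) = ((q ^ b : ℕ) : Ω) := by push_cast; exact h1
        exact Nat.pow_right_injective hq (Nat.cast_injective h2)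
      have hmem : ∀ n : ℕ, (fun n : ℕ => (q : Ω) ^ n * α) n ∈ {μ : Ω | φ.HasEigenvalue μ} :=
        fun n => Module.End.hasEigenvalue_iff.mpr (hc n)
      exact (Set.infinite_of_injective_forall_mem hinj hmem) φ.finite_hasEigenvalue
    obtain ⟨n, hn⟩ := hex
    exact span_chain hq σ hdiag hrel hp n α hn


lemma chain_indep (hq : 2 ≤ q) (σ : Ω →+* ℂ) (hdiag : (⨆ α : Ω, φ.eigenspace α) = ⊤)
    (hrel : N * φ = (q : Ω) • (φ * N)) (hp : WDPure q φ N k) (α : Ω) :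
    ∀ (t : Finset ℕ) (x : ℕ → V), (∀ j ∈ t, x j ∈ Bsub q φ N k (j, (q : Ω) ^ j * α)) →
      (∑ j ∈ t, x j = 0) → ∀ j ∈ t, x j = 0 := by
  classical
  have hq0 : (q : Ω) ≠ 0 := Nat.cast_ne_zero.mpr (by omega)
  by_cases hb : φ.eigenspace α = ⊥
  · intro t x hx _ j hj
    have h1 : x j ∈ φ.eigenspace α := by
      have h2 := B_le hq0 hrel j ((q : Ω) ^ j * α) (hx j hj)
      rwa [← mul_assoc, inv_pow, inv_mul_cancel₀ (pow_ne_zero _ hq0), one_mul] at h2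
    rw [hb] at h1; simpa using h1
  · obtain ⟨i, hi⟩ := exists_wt hdiag hp hb
    have hwtj : ∀ j : ℕ, wt q k ((q : Ω) ^ j * α) = i + 2 * j := by
      intro j
      apply wt_eq hq σ
      have h1 := weil_mul_pow hq hi j
      have h2 : (k + (i : ℚ)) + 2 * (j : ℚ) = k + ((i + 2 * j : ℤ) : ℚ) := by push_cast; ring
      rwa [h2] at h1
    have hwm : ∀ j : ℕ, IsWeilNumber q (k + (((i + 2 * (j : ℤ)) : ℤ) : ℚ)) ((q : Ω) ^ j * α) := by
      intro j
      have h1 := weil_mul_pow hq hi j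
      have h2 : (k + (i : ℚ)) + 2 * (j : ℚ) = k + ((i + 2 * (j : ℤ) : ℤ) : ℚ) := by
        push_cast; ring
      rwa [h2] at h1
    intro t
    induction t using Finset.strongInductionOn with
    | _ t IH =>
      intro x hx hsum j hj
      have hne : t.Nonempty := ⟨j, hj⟩
      set T := t.max' hne with hT
      have hTt : T ∈ t := t.max'_mem hne
      have hxT : x T = 0 := by
        obtain ⟨pT, hpT, hpTx⟩ := hx T hTt
        have hkerT : (N ^ (i + 2 * (T : ℤ) + 1).toNat) pT = 0 := by
          have h1 := (mem_Psub.mp hpT).1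
          rwa [hwtj T] at h1
        rcases lt_or_ge (i + (T : ℤ)) 0 with hcase | hcase
        · have hle : (i + 2 * (T : ℤ) + 1).toNat ≤ T := by omega
          rw [← hpTx, ← Nat.sub_add_cancel hle, pow_add, Module.End.mul_apply, hkerT, map_zero]
        · set c : ℕ := (i + (T : ℤ)).toNat with hc
          have hczero : ∀ j' ∈ t, j' ≠ T → (N ^ c) (x j') = 0 := by
            intro j' hj' hjT'
            obtain ⟨p, hp', hpx⟩ := hx j' hj'
            have hj'T : j' < T := lt_of_le_of_ne (t.le_max' j' hj') hjT'
            have hker : (N ^ (i + 2 * (j' : ℤ) + 1).toNat) p = 0 := by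
              have h1 := (mem_Psub.mp hp').1
              rwa [hwtj j'] at h1
            have hle2 : (i + 2 * (j' : ℤ) + 1).toNat ≤ c + j' := by omega
            rw [← hpx, ← Module.End.mul_apply, ← pow_add,
              ← Nat.sub_add_cancel hle2, pow_add, Module.End.mul_apply, hker, map_zero]
          have hsum2 : (N ^ c) (x T) = 0 := by
            have h1 : ∑ j' ∈ t, (N ^ c) (x j') = 0 := by
              rw [← map_sum, hsum, map_zero]
            rw [← Finset.add_sum_erase _ _ hTt] at h1
            have h2 : ∑ j' ∈ t.erase T, (N ^ c) (x j') = 0 :=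
              Finset.sum_eq_zero fun j' hj' =>
                hczero j' (Finset.mem_of_mem_erase hj') (Finset.mem_erase.mp hj').1
            rw [h2, add_zero] at h1
            exact h1
          have hfin : (N ^ ((i + 2 * (T : ℤ)).toNat)) pT = 0 := by
            rw [show (i + 2 * (T : ℤ)).toNat = c + T by omega, pow_add, Module.End.mul_apply,
              hpTx]
            exact hsum2
          have hz := chain_inj hp (by omega : (0:ℤ) ≤ i + 2 * T) (hwm T) pT
            (mem_Psub.mp hpT).2 hfin
          rw [← hpTx, hz, map_zero]
      by_cases hjT : j = T
      · rw [hjT]; exact hxT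
      · refine IH (t.erase T) (Finset.erase_ssubset hTt) x
          (fun j' hj' => hx j' (Finset.mem_of_mem_erase hj')) ?_ j
          (Finset.mem_erase.mpr ⟨hjT, hj⟩)
        rw [Finset.sum_erase_eq_sub hTt, hsum, hxT, sub_zero]

lemma B_indep (hq : 2 ≤ q) (σ : Ω →+* ℂ) (hdiag : (⨆ α : Ω, φ.eigenspace α) = ⊤)
    (hrel : N * φ = (q : Ω) • (φ * N)) (hp : WDPure q φ N k) :
    iSupIndep (Bsub q φ N k) := by
  classical
  have hq0 : (q : Ω) ≠ 0 := Nat.cast_ne_zero.mpr (by omega)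
  apply isupindep_of_sums
  intro s x hx hsum p hps
  set ev : ℕ × Ω → Ω := fun r => ((q : Ω)⁻¹) ^ r.1 * r.2 with hev
  set A := s.image ev with hA
  have hfiber : ∀ α ∈ A, (∑ r ∈ s.filter (fun r => ev r = α), x r) = 0 := by
    have hzero : ∑ α ∈ A, (∑ r ∈ s.filter (fun r => ev r = α), x r) = 0 := by
      rw [Finset.sum_fiberwise_of_maps_to (fun r hr => Finset.mem_image_of_mem ev hr)]
      exact hsum
    refine eig_sum_zero φ id A (Set.injOn_id _)
      (fun α => ∑ r ∈ s.filter (fun r => ev r = α), x r) ?_ hzero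
    intro α _
    refine Submodule.sum_mem _ fun r hr => ?_
    obtain ⟨hrs, hre⟩ := Finset.mem_filter.mp hr
    have h1 := B_le hq0 hrel r.1 r.2 (hx r hrs)
    have h2 : ev r = ((q : Ω)⁻¹) ^ r.1 * r.2 := rfl
    rw [id_eq, ← hre, h2]
    exact h1
  -- now the fiber of p
  set α₀ := ev p with hα₀
  have hα₀A : α₀ ∈ A := Finset.mem_image_of_mem ev hps
  have hβ : ∀ r ∈ s.filter (fun r => ev r = α₀), r = (r.1, (q : Ω) ^ r.1 * α₀) := by
    intro r hr
    have hre := (Finset.mem_filter.mp hr).2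
    have : r.2 = (q : Ω) ^ r.1 * α₀ := by
      rw [← hre, hev]
      field_simp
      rw [one_div, inv_pow, mul_assoc, mul_inv_cancel₀ (pow_ne_zero _ hq0), mul_one]
    exact Prod.ext rfl this
  set t := (s.filter (fun r => ev r = α₀)).image Prod.fst with ht
  set y : ℕ → V := fun j => if (j, (q : Ω) ^ j * α₀) ∈ s.filter (fun r => ev r = α₀)
    then x (j, (q : Ω) ^ j * α₀) else 0 with hy
  have hinjfst : Set.InjOn Prod.fst ((s.filter (fun r => ev r = α₀) : Finset (ℕ × Ω)) : Set (ℕ × Ω)) := by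
    intro r hr r' hr' hrr'
    rw [hβ r (by exact_mod_cast hr), hβ r' (by exact_mod_cast hr'), hrr']
  have htsum : ∑ j ∈ t, y j = ∑ r ∈ s.filter (fun r => ev r = α₀), x r := by
    rw [ht, Finset.sum_image (fun a ha b hb hab => hinjfst ha hb hab)]
    refine Finset.sum_congr rfl fun r hr => ?_
    have h1 : (r.1, (q : Ω) ^ r.1 * α₀) = r := (hβ r hr).symm
    rw [hy]
    simp only []
    rw [h1, if_pos hr]
  have hymem : ∀ j ∈ t, y j ∈ Bsub q φ N k (j, (q : Ω) ^ j * α₀) := by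
    intro j hj
    rw [hy]
    simp only []
    split_ifs with hmem
    · exact hx _ (Finset.mem_filter.mp hmem).1
    · exact Submodule.zero_mem _
  have hall := chain_indep hq σ hdiag hrel hp α₀ t y hymem (by rw [htsum, hfiber α₀ hα₀A])
  have hpt : p.1 ∈ t := by
    rw [ht]
    exact Finset.mem_image_of_mem Prod.fst (Finset.mem_filter.mpr ⟨hps, rfl⟩)
  have hyp := hall p.1 hpt
  have hp1 : (p.1, (q : Ω) ^ p.1 * α₀) = p := (hβ p (Finset.mem_filter.mpr ⟨hps, rfl⟩)).symm
  have hfilterp : (p.1, (q : Ω) ^ p.1 * α₀) ∈ s.filter (fun r => ev r = α₀) := by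
    rw [hp1]
    exact Finset.mem_filter.mpr ⟨hps, rfl⟩
  rw [hy] at hyp
  simp only [] at hyp
  rw [if_pos hfilterp] at hyp
  rw [hp1] at hyp
  exact hyp

lemma B_internal [DecidableEq Ω] (hq : 2 ≤ q) (σ : Ω →+* ℂ) (hφ : IsUnit φ)
    (hdiag : (⨆ α : Ω, φ.eigenspace α) = ⊤)
    (hrel : N * φ = (q : Ω) • (φ * N)) (hp : WDPure q φ N k) :
    DirectSum.IsInternal (Bsub q φ N k) := by
  classical
  exact DirectSum.isInternal_submodule_of_iSupIndep_of_iSup_eq_top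
    (B_indep hq σ hdiag hrel hp) (span_top hq σ hφ hdiag hrel hp)



lemma pow_succ_apply (M : Module.End Ω V) (j : ℕ) (x : V) :
    (M ^ (j + 1)) x = M ((M ^ j) x) := by
  rw [pow_succ']; rfl

noncomputable def bEquiv (q : ℕ) (φ N : Module.End Ω V) (k : ℚ) (p : ℕ × Ω)
    (hinj : ∀ x ∈ Psub q φ N k p.2, (N ^ p.1) x = 0 → x = 0) :
    Psub q φ N k p.2 ≃ₗ[Ω] Bsub q φ N k p :=
  mapEquiv (N ^ p.1) (Psub q φ N k p.2) hinj

lemma bEquiv_coe {q : ℕ} {φ N : Module.End Ω V} {k : ℚ} {p : ℕ × Ω}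
    {hinj : ∀ x ∈ Psub q φ N k p.2, (N ^ p.1) x = 0 → x = 0} (x : Psub q φ N k p.2) :
    ((bEquiv q φ N k p hinj x : Bsub q φ N k p) : V) = (N ^ p.1) (x : V) := rfl

lemma exists_basis [DecidableEq Ω] (hq : 2 ≤ q) (σ : Ω →+* ℂ) (hφ : IsUnit φ)
    (hdiag : (⨆ α : Ω, φ.eigenspace α) = ⊤)
    (hrel : N * φ = (q : Ω) • (φ * N)) (hp : WDPure q φ N k) (n : Ω → ℕ)
    (hn : ∀ β, finrank Ω (Psub q φ N k β) = n β) :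
    ∃ (c : ∀ β : Ω, Fin (n β) → V)
      (b : Basis ((p : ℕ × Ω) × (PLift ((p.1 : ℤ) ≤ wt q k p.2) × Fin (n p.2))) Ω V),
      (∀ β i, c β i ∈ Psub q φ N k β) ∧
      (∀ (p : ℕ × Ω) (h : (p.1 : ℤ) ≤ wt q k p.2) (i : Fin (n p.2)),
        (b ⟨p, (⟨h⟩, i)⟩ : V) = (N ^ p.1) (c p.2 i)) := by
  classical
  set bP : ∀ β : Ω, Basis (Fin (n β)) Ω (Psub q φ N k β) := fun β =>
    (Module.finBasis Ω _).reindex (finCongr (hn β)) with hbP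
  have hbB : ∀ p : ℕ × Ω,
      ∃ bb : Basis (PLift ((p.1 : ℤ) ≤ wt q k p.2) × Fin (n p.2)) Ω (Bsub q φ N k p),
      ∀ (h : (p.1 : ℤ) ≤ wt q k p.2) (i : Fin (n p.2)),
        (bb (⟨h⟩, i) : V) = (N ^ p.1) ((bP p.2 i : V)) := by
    intro p
    by_cases h : (p.1 : ℤ) ≤ wt q k p.2
    · haveI : Unique (PLift ((p.1 : ℤ) ≤ wt q k p.2)) := uniqueOfSubsingleton ⟨h⟩
      refine ⟨((bP p.2).map (bEquiv q φ N k p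
          (P_inj hq σ hdiag hp h))).reindex (Equiv.uniqueProd _ _).symm, ?_⟩
      intro h' i
      conv_lhs => rw [Basis.reindex_apply]
      rw [show (Equiv.uniqueProd (Fin (n p.2))
        (PLift ((p.1 : ℤ) ≤ wt q k p.2))).symm.symm (⟨h'⟩, i) = i from rfl]
      conv_lhs => rw [Basis.map_apply]
      exact bEquiv_coe (bP p.2 i)
    · haveI hne : IsEmpty (PLift ((p.1 : ℤ) ≤ wt q k p.2)) := ⟨fun a => h a.down⟩
      haveI : Subsingleton (Bsub q φ N k p) := by
        rw [B_bot (by omega : wt q k p.2 + 1 ≤ (p.1 : ℤ))]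
        infer_instance
      exact ⟨Basis.empty _, fun h' => absurd h' h⟩
  choose bB hbBspec using hbB
  refine ⟨fun β i => (bP β i : V), (B_internal hq σ hφ hdiag hrel hp).collectedBasis bB,
    fun β i => (bP β i).2, fun p h i => ?_⟩
  have hco := (B_internal hq σ hφ hdiag hrel hp).collectedBasis_coe bB
  have h1 : ((B_internal hq σ hφ hdiag hrel hp).collectedBasis bB) ⟨p, (⟨h⟩, i)⟩
      = ((bB p (⟨h⟩, i)) : V) := by rw [hco]
  rw [h1, hbBspec p h i]


end Main

end Stmt6

/-- Let `φ` be a diagonalizable invertible endomorphism and let `N`, `N'`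
both satisfy the Weil–Deligne commutation relation with `φ`.  If `(φ, N)` and `(φ, N')`
are both pure of weight `k`, then there is an invertible `g` commuting with `φ` and
intertwining `N` with `N'`:  given a semisimple Frobenius there is, up to equivalence, at
most one monodromy operator making the representation pure. -/
theorem statement6 {Ω V : Type*} [Field Ω] [CharZero Ω] [IsAlgClosed Ω]
    [AddCommGroup V] [Module Ω V] [FiniteDimensional Ω V]
    (q : ℕ) (hq : 2 ≤ q) (φ N N' : Module.End Ω V)
    (hφ : IsUnit φ) (hdiag : (⨆ α : Ω, φ.eigenspace α) = ⊤)
    (hrel : N * φ = (q : Ω) • (φ * N)) (hrel' : N' * φ = (q : Ω) • (φ * N'))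
    (k : ℚ) (hNpure : WDPure q φ N k) (hN'pure : WDPure q φ N' k) :
    ∃ g : Module.End Ω V, IsUnit g ∧ g * φ = φ * g ∧ g * N = N' * g := by
  classical
  by_cases hσ : Nonempty (Ω →+* ℂ)
  · obtain ⟨σ⟩ := hσ
    have hq0 : (q : Ω) ≠ 0 := Nat.cast_ne_zero.mpr (by omega)
    -- rank equality of primitive subspaces
    have hrank : ∀ β : Ω,
        finrank Ω (Stmt6.Psub q φ N k β) = finrank Ω (Stmt6.Psub q φ N' k β) := by
      intro β
      by_cases hb : φ.eigenspace β = ⊥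
      · have h1 : Stmt6.Psub q φ N k β = ⊥ := by
          rw [eq_bot_iff]
          refine le_trans Stmt6.P_le ?_
          rw [hb]
        have h2 : Stmt6.Psub q φ N' k β = ⊥ := by
          rw [eq_bot_iff]
          refine le_trans Stmt6.P_le ?_
          rw [hb]
        rw [h1, h2]
      · obtain ⟨i, hi⟩ := Stmt6.exists_wt hdiag hNpure hb
        have hwt : Stmt6.wt q k β = i := Stmt6.wt_eq hq σ hi
        have hα : IsWeilNumber q (k + Stmt6.wt q k β) β := by rw [hwt]; exact hi
        rcases lt_or_ge (Stmt6.wt q k β) 0 with hneg | hpos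
        · have hker : ∀ M : Module.End Ω V, Stmt6.Psub q φ M k β = ⊥ := by
            intro M
            rw [eq_bot_iff]
            intro x hx
            have h1 := (Stmt6.mem_Psub.mp hx).1
            rw [show (Stmt6.wt q k β + 1).toNat = 0 by omega, pow_zero] at h1
            simpa using h1
          rw [hker N, hker N']
        · have e1 := Stmt6.finrank_P hq hdiag hrel hNpure hα hpos
          have e2 := Stmt6.finrank_P hq hdiag hrel' hN'pure hα hpos
          omega
    obtain ⟨c, b, hc, hb⟩ := Stmt6.exists_basis hq σ hφ hdiag hrel hNpure
      (fun β => finrank Ω (Stmt6.Psub q φ N k β)) (fun β => rfl)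
    obtain ⟨c', b', hc', hb'⟩ := Stmt6.exists_basis hq σ hφ hdiag hrel' hN'pure
      (fun β => finrank Ω (Stmt6.Psub q φ N k β)) (fun β => (hrank β).symm)
    set E := b.equiv b' (Equiv.refl _) with hE
    have hEb : ∀ a, E.toLinearMap (b a) = b' a := by
      intro a
      have h1 : E (b a) = b' (Equiv.refl _ a) := b.equiv_apply a b' (Equiv.refl _)
      simpa using h1
    refine ⟨E.toLinearMap, (Module.End.isUnit_iff _).mpr E.bijective, ?_, ?_⟩
    · refine b.ext fun a => ?_
      obtain ⟨p, hpl, i⟩ := a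
      have hbv := hb p hpl.down i
      have hbv' := hb' p hpl.down i
      have heig : (b ⟨p, (hpl, i)⟩ : V) ∈ φ.eigenspace (((q : Ω)⁻¹) ^ p.1 * p.2) := by
        rw [show hpl = PLift.up hpl.down from rfl, hbv]
        exact Stmt6.Npow_eig hq0 hrel (Stmt6.P_le (hc p.2 i)) p.1
      have heig' : (b' ⟨p, (hpl, i)⟩ : V) ∈ φ.eigenspace (((q : Ω)⁻¹) ^ p.1 * p.2) := by
        rw [show hpl = PLift.up hpl.down from rfl, hbv']
        exact Stmt6.Npow_eig hq0 hrel' (Stmt6.P_le (hc' p.2 i)) p.1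
      rw [Module.End.mul_apply, Module.End.mul_apply,
        Module.End.mem_eigenspace_iff.mp heig, map_smul, hEb,
        Module.End.mem_eigenspace_iff.mp heig']
    · refine b.ext fun a => ?_
      obtain ⟨⟨j, β⟩, hpl, i⟩ := a
      have hj : ((j : ℕ) : ℤ) ≤ Stmt6.wt q k β := hpl.down
      have hbv : (b ⟨(j, β), (hpl, i)⟩ : V) = (N ^ j) (c β i) := by
        rw [show hpl = PLift.up hpl.down from rfl]
        exact hb (j, β) hpl.down i
      have hbv' : (b' ⟨(j, β), (hpl, i)⟩ : V) = (N' ^ j) (c' β i) := by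
        rw [show hpl = PLift.up hpl.down from rfl]
        exact hb' (j, β) hpl.down i
      rw [Module.End.mul_apply, Module.End.mul_apply]
      by_cases h2 : (((j + 1 : ℕ)) : ℤ) ≤ Stmt6.wt q k β
      · have hb2 := hb (j + 1, β) h2 i
        have hb2' := hb' (j + 1, β) h2 i
        have hNb : N (b ⟨(j, β), (hpl, i)⟩) = b ⟨(j + 1, β), (⟨h2⟩, i)⟩ := by
          rw [hbv, hb2, Stmt6.pow_succ_apply]
        rw [hNb, hEb, hEb, hb2', hbv', ← Stmt6.pow_succ_apply]
      · have hwtj : Stmt6.wt q k β = (j : ℤ) := by omega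
        have hker : (N ^ (j + 1)) (c β i) = 0 := by
          have h1 := (Stmt6.mem_Psub.mp (hc β i)).1
          rwa [hwtj, show ((j : ℤ) + 1).toNat = j + 1 by omega] at h1
        have hker' : (N' ^ (j + 1)) (c' β i) = 0 := by
          have h1 := (Stmt6.mem_Psub.mp (hc' β i)).1
          rwa [hwtj, show ((j : ℤ) + 1).toNat = j + 1 by omega] at h1
        have hL : N (b ⟨(j, β), (hpl, i)⟩) = 0 := by
          rw [hbv, ← Stmt6.pow_succ_apply, hker]
        have hR : N' (b' ⟨(j, β), (hpl, i)⟩) = 0 := by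
          rw [hbv', ← Stmt6.pow_succ_apply, hker']
        rw [hL, map_zero, hEb, hR]
  · -- no embedding into ℂ : V is trivial
    refine ⟨1, isUnit_one, by rw [one_mul, mul_one], ?_⟩
    have hUeq : ∀ w w' : ℚ, wdWeightSpace q φ w ≤ wdWeightSpace q φ w' := by
      intro w w'
      refine iSup_le fun α => iSup_le fun hα => ?_
      exact le_iSup_of_le α (le_iSup_of_le ⟨hα.1, fun σ => absurd ⟨σ⟩ hσ⟩ le_rfl)
    have h01 : wdWeightSpace q φ 0 = ⊥ := by
      have hd := iSupIndep_def.mp hNpure.1.submodule_iSupIndep (0 : ℚ)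
      rw [eq_bot_iff]
      intro x hx
      refine hd.le_bot ⟨hx, ?_⟩
      exact Submodule.mem_iSup_of_mem 1
        (Submodule.mem_iSup_of_mem (by norm_num) (hUeq 0 1 hx))
    have hx0 : ∀ x : V, x = 0 := by
      intro x
      have hx : x ∈ (⊤ : Submodule Ω V) := Submodule.mem_top
      rw [← hNpure.1.submodule_iSup_eq_top] at hx
      have h2 : (⨆ w : ℚ, wdWeightSpace q φ w) ≤ ⊥ := by
        refine iSup_le fun w => ?_
        rw [← h01]
        exact hUeq w 0
      simpa using h2 hx
    refine LinearMap.ext fun x => ?_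
    rw [Module.End.mul_apply, Module.End.mul_apply, hx0 ((1 : Module.End Ω V) (N x)),
      hx0 (N' ((1 : Module.End Ω V) x))]
end

section
/- Let (φ, N) be a Weil–Deligne pair on a finite-dimensional Ω-vector space V with φ diagonalizable, and suppose (φ, N) is pure of weight k ∈ ℚ. For each integer i ≥ 0 set P(i) := V_{k+i} ∩ ker(N^{i+1}). Then: (a) for all integers 0 ≤ j ≤ i, the map N^j is injective on P(i) and N^j(P(i)) ⊆ V_{k+i−2j}; and (b) V is the internal direct sum of the family of subspaces N^j(P(i)) indexed by pairs of integers (i, j) with 0 ≤ j ≤ i. (The primitive decomposition of a pure Frobenius-semisimple Weil–Deligne representation, established in the proof of Lemma 1.2.) -/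
open Module

section WeilDeligne

variable {Ω V : Type*} [Field Ω] [CharZero Ω] [AddCommGroup V] [Module Ω V]

lemma isWeilNumber_div {q : ℕ} (hq : 2 ≤ q) {w : ℚ} {α : Ω} (h : IsWeilNumber q w α) :
    IsWeilNumber q (w - 2) (α / (q : Ω)) := by
  obtain ⟨halg, habs⟩ := h
  have hq0 : (0:ℝ) < (q:ℝ) := by
    have : 0 < q := by omega
    exact_mod_cast this
  constructor
  · have h1 : IsAlgebraic ℚ ((q : Ω)⁻¹) := by
      have : ((q:Ω))⁻¹ = algebraMap ℚ Ω ((q:ℚ)⁻¹) := by push_cast; simp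
      rw [this]; exact isAlgebraic_algebraMap _
    rw [div_eq_mul_inv]
    exact (halg.isIntegral.mul h1.isIntegral).isAlgebraic
  · intro σ
    have h2 := habs σ
    rw [map_div₀, map_natCast, norm_div, div_pow, h2]
    have h1 : ‖(q:ℂ)‖ = (q:ℝ) := by simp [Complex.norm_natCast q]
    rw [h1]
    push_cast
    rw [Real.rpow_sub hq0]
    rw [show (2:ℝ) = ((2:ℕ):ℝ) by norm_num, Real.rpow_natCast]

/-- Key commutation: `(φ - (α/q)•1)^n * N = (q⁻¹)^n • (N * (φ - α•1)^n)`. -/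
lemma wd_comm_pow {q : ℕ} (hq0 : (q:Ω) ≠ 0) {φ N : Module.End Ω V}
    (hrel : N * φ = (q : Ω) • (φ * N)) (α : Ω) (n : ℕ) :
    (φ - (α / q) • 1) ^ n * N = ((q:Ω)⁻¹) ^ n • (N * (φ - α • 1) ^ n) := by
  have hstep : (φ - (α / q) • 1) * N = (q:Ω)⁻¹ • (N * (φ - α • 1)) := by
    have hφN : φ * N = (q:Ω)⁻¹ • (N * φ) := by
      rw [hrel, smul_smul, inv_mul_cancel₀ hq0, one_smul]
    rw [sub_mul, mul_sub, hφN, smul_sub]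
    congr 1
    rw [smul_mul_assoc, one_mul, mul_smul_comm, mul_one, smul_smul, div_eq_mul_inv, mul_comm]
  induction n with
  | zero => simp
  | succ n ih =>
    rw [pow_succ, mul_assoc, hstep, mul_smul_comm, ← mul_assoc, ih, smul_mul_assoc,
      mul_assoc, ← pow_succ, smul_smul, ← pow_succ']

lemma wd_map_maxGen {q : ℕ} (hq0 : (q:Ω) ≠ 0) {φ N : Module.End Ω V}
    (hrel : N * φ = (q : Ω) • (φ * N)) (α : Ω) :
    Submodule.map N (φ.maxGenEigenspace α) ≤ φ.maxGenEigenspace (α / q) := by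
  rintro x ⟨y, hy, rfl⟩
  simp only [SetLike.mem_coe, Module.End.mem_maxGenEigenspace] at hy ⊢
  obtain ⟨n, hn⟩ := hy
  refine ⟨n, ?_⟩
  have := congrArg (fun f : Module.End Ω V => f y) (wd_comm_pow hq0 hrel α n)
  simp only [Module.End.mul_apply, LinearMap.smul_apply] at this
  rw [this, hn, map_zero, smul_zero]

lemma wd_map_weight {q : ℕ} (hq : 2 ≤ q) {φ N : Module.End Ω V}
    (hrel : N * φ = (q : Ω) • (φ * N)) (w : ℚ) :
    Submodule.map N (wdWeightSpace q φ w) ≤ wdWeightSpace q φ (w - 2) := by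
  have hq0 : (q:Ω) ≠ 0 := by
    have : (0:ℕ) < q := by omega
    exact_mod_cast Nat.cast_ne_zero.mpr (by omega)
  rw [wdWeightSpace, Submodule.map_iSup]
  refine iSup_le fun α => ?_
  rw [Submodule.map_iSup]
  refine iSup_le fun hα => ?_
  refine le_trans (wd_map_maxGen hq0 hrel α) ?_
  exact le_iSup₂ (f := fun β (_ : β ∈ {β : Ω | IsWeilNumber q (w-2) β}) => φ.maxGenEigenspace β)
    (α / q) (isWeilNumber_div hq hα)

lemma wd_map_pow_weight {q : ℕ} (hq : 2 ≤ q) {φ N : Module.End Ω V}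
    (hrel : N * φ = (q : Ω) • (φ * N)) (m : ℕ) (w w' : ℚ) (hw : w' = w - 2 * m) :
    Submodule.map (N ^ m) (wdWeightSpace q φ w) ≤ wdWeightSpace q φ w' := by
  induction m generalizing w' with
  | zero =>
    simp only [Nat.cast_zero, mul_zero, sub_zero] at hw
    subst hw
    rw [pow_zero, Module.End.one_eq_id, Submodule.map_id]
  | succ m ih =>
    rw [pow_succ']
    rw [show (N * N ^ m : Module.End Ω V) = N ∘ₗ (N ^ m) from rfl, Submodule.map_comp]
    refine le_trans (Submodule.map_mono (ih (w - 2*m) rfl)) ?_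
    refine le_trans (wd_map_weight hq hrel _) ?_
    have : w - 2*m - 2 = w' := by rw [hw]; push_cast; ring
    rw [this]

end WeilDeligne

/-- primitive decomposition of a pure Frobenius-semisimple Weil–Deligne
representation.  With `P(i) = V_{k+i} ∩ ker (N^{i+1})`:  (a) for `0 ≤ j ≤ i`, `N^j` is
injective on `P(i)` and maps it into `V_{k+i-2j}`; (b) `V` is the internal direct sum of
the subspaces `N^j (P(i))` over pairs `(i, j)` with `0 ≤ j ≤ i`. -/
theorem statement7 {Ω V : Type*} [Field Ω] [CharZero Ω] [IsAlgClosed Ω]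
    [AddCommGroup V] [Module Ω V] [FiniteDimensional Ω V]
    (q : ℕ) (hq : 2 ≤ q) (φ N : Module.End Ω V)
    (hφ : IsUnit φ) (hrel : N * φ = (q : Ω) • (φ * N))
    (hdiag : (⨆ α : Ω, φ.eigenspace α) = ⊤)
    (k : ℚ) (hpure : WDPure q φ N k) :
    (∀ i j : ℕ, j ≤ i →
      (∀ x ∈ wdWeightSpace q φ (k + i) ⊓ LinearMap.ker (N ^ (i + 1)),
        (N ^ j) x = 0 → x = 0) ∧
      Submodule.map (N ^ j) (wdWeightSpace q φ (k + i) ⊓ LinearMap.ker (N ^ (i + 1))) ≤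
        wdWeightSpace q φ (k + i - 2 * j)) ∧
    DirectSum.IsInternal (fun p : {x : ℕ × ℕ // x.2 ≤ x.1} =>
      Submodule.map (N ^ p.1.2)
        (wdWeightSpace q φ (k + p.1.1) ⊓ LinearMap.ker (N ^ (p.1.1 + 1)))) := by
  classical
  obtain ⟨hmixed, hvanish, hbij⟩ := hpure
  -- injectivity of N^i on V_{k+i}
  have injN : ∀ (i : ℕ), ∀ x ∈ wdWeightSpace q φ (k + i), (N ^ i) x = 0 → x = 0 := by
    intro i x hx hNx
    rcases Nat.eq_zero_or_pos i with h0 | h1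
    · subst h0; simpa using hNx
    · refine (hbij i (by exact_mod_cast h1)).1 x ?_ ?_
      · simpa using hx
      · simpa using hNx
  -- surjectivity of N^i onto V_{k-i}
  have surjN : ∀ (i : ℕ), 1 ≤ i →
      Submodule.map (N ^ i) (wdWeightSpace q φ (k + i)) = wdWeightSpace q φ (k - i) := by
    intro i h1
    have h := (hbij i (by exact_mod_cast h1)).2
    simpa using h
  -- part (a)
  have parta : ∀ i j : ℕ, j ≤ i →
      (∀ x ∈ wdWeightSpace q φ (k + i) ⊓ LinearMap.ker (N ^ (i + 1)),
        (N ^ j) x = 0 → x = 0) ∧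
      Submodule.map (N ^ j) (wdWeightSpace q φ (k + i) ⊓ LinearMap.ker (N ^ (i + 1))) ≤
        wdWeightSpace q φ (k + i - 2 * j) := by
    intro i j hj
    constructor
    · intro x hx hNx
      have hxW : x ∈ wdWeightSpace q φ (k + i) := (Submodule.mem_inf.mp hx).1
      have hNi : (N ^ i) x = 0 := by
        have hpow : (N : Module.End Ω V) ^ i = N ^ (i - j) * N ^ j := by
          rw [← pow_add]; congr 1; omega
        rw [hpow, Module.End.mul_apply, hNx, map_zero]
      exact injN i x hxW hNi
    · refine le_trans (Submodule.map_mono inf_le_left) ?_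
      exact wd_map_pow_weight hq hrel j (k + i) _ (by push_cast; ring)
  refine ⟨parta, ?_⟩
  -- the family of pieces
  set A : {x : ℕ × ℕ // x.2 ≤ x.1} → Submodule Ω V := fun p =>
    Submodule.map (N ^ p.1.2)
      (wdWeightSpace q φ (k + p.1.1) ⊓ LinearMap.ker (N ^ (p.1.1 + 1))) with hA
  -- N maps the span of the pieces into itself
  have NmapS : Submodule.map N (⨆ p, A p) ≤ ⨆ p, A p := by
    rw [Submodule.map_iSup]
    refine iSup_le fun p => ?_
    obtain ⟨⟨i, j⟩, hji⟩ := p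
    have hcomp : Submodule.map N (A ⟨(i,j), hji⟩) =
        Submodule.map (N ^ (j+1))
          (wdWeightSpace q φ (k + i) ⊓ LinearMap.ker (N ^ (i+1))) := by
      rw [hA]
      rw [pow_succ', Module.End.mul_eq_comp, Submodule.map_comp]
    rw [hcomp]
    rcases lt_or_eq_of_le hji with h | h
    · exact le_iSup A ⟨(i, j+1), h⟩
    · rintro x ⟨y, hy, rfl⟩
      have h' : j = i := h
      subst h'
      rw [LinearMap.mem_ker.mp (Submodule.mem_inf.mp hy).2]
      exact zero_mem _
  have NpowS : ∀ m : ℕ, Submodule.map (N ^ m) (⨆ p, A p) ≤ ⨆ p, A p := by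
    intro m
    induction m with
    | zero => rw [pow_zero, Module.End.one_eq_id, Submodule.map_id]
    | succ m ih =>
      rw [pow_succ, Module.End.mul_eq_comp, Submodule.map_comp]
      exact le_trans (Submodule.map_mono NmapS) ih
  have PleS : ∀ i : ℕ,
      wdWeightSpace q φ (k + i) ⊓ LinearMap.ker (N ^ (i+1)) ≤ ⨆ p, A p := by
    intro i
    have h0 : A ⟨(i, 0), Nat.zero_le i⟩ =
        wdWeightSpace q φ (k + i) ⊓ LinearMap.ker (N ^ (i+1)) := by
      rw [hA]; simp only [pow_zero, Module.End.one_eq_id, Submodule.map_id]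
    exact h0 ▸ le_iSup A ⟨(i, 0), Nat.zero_le i⟩
  -- decomposition step
  have decomp : ∀ n : ℕ, wdWeightSpace q φ (k + n) ≤
      (wdWeightSpace q φ (k + n) ⊓ LinearMap.ker (N ^ (n+1))) ⊔
        Submodule.map N (wdWeightSpace q φ (k + (n + 2 : ℕ))) := by
    intro n
    intro x hx
    have h1 : (N ^ (n+1)) x ∈ wdWeightSpace q φ (k - (n + 2 : ℕ)) := by
      refine wd_map_pow_weight hq hrel (n+1) (k + n) _ (by push_cast; ring) ?_
      exact Submodule.mem_map_of_mem hx
    rw [← surjN (n+2) (by omega)] at h1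
    obtain ⟨y, hy, hyx⟩ := h1
    refine Submodule.mem_sup.mpr ⟨x - N y, ?_, N y, Submodule.mem_map_of_mem hy, by abel⟩
    refine Submodule.mem_inf.mpr ⟨?_, ?_⟩
    · refine sub_mem hx ?_
      have hNy : N y ∈ wdWeightSpace q φ (k + (n+2:ℕ) - 2) :=
        wd_map_weight hq hrel _ (Submodule.mem_map_of_mem hy)
      have : k + (n+2:ℕ) - 2 = k + n := by push_cast; ring
      rwa [this] at hNy
    · rw [LinearMap.mem_ker, map_sub]
      have : (N ^ (n+1)) (N y) = (N ^ (n+2)) y := by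
        rw [show ((N : Module.End Ω V) ^ (n+2)) = N ^ (n+1) * N from pow_succ N (n+1),
          Module.End.mul_apply]
      rw [this, hyx, sub_self]
  -- finiteness of nonzero weights
  have hfin : {w : ℚ | wdWeightSpace q φ w ≠ ⊥}.Finite :=
    WellFoundedGT.finite_ne_bot_of_iSupIndep hmixed.submodule_iSupIndep
  have hfin2 : {n : ℕ | wdWeightSpace q φ (k + n) ≠ ⊥}.Finite := by
    have : {n : ℕ | wdWeightSpace q φ (k + n) ≠ ⊥} =
        (fun n : ℕ => k + (n : ℚ)) ⁻¹' {w : ℚ | wdWeightSpace q φ w ≠ ⊥} := rfl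
    rw [this]
    refine Set.Finite.preimage ?_ hfin
    intro a _ b _ hab
    have hab' : k + (a : ℚ) = k + (b : ℚ) := hab
    have : (a : ℚ) = b := by linarith
    exact_mod_cast this
  obtain ⟨M, hM⟩ := hfin2.bddAbove
  have hMbot : ∀ n : ℕ, M + 1 ≤ n → wdWeightSpace q φ (k + n) = ⊥ := by
    intro n hn
    by_contra hne
    have := hM hne
    omega
  -- positive-weight spaces are contained in the span of the pieces
  have WposS : ∀ n : ℕ, wdWeightSpace q φ (k + n) ≤ ⨆ p, A p := by
    have key : ∀ d n : ℕ, M + 1 ≤ n + d → wdWeightSpace q φ (k + n) ≤ ⨆ p, A p := by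
      intro d
      induction d with
      | zero => intro n hn; rw [hMbot n (by omega)]; exact bot_le
      | succ d ih =>
        intro n hn
        refine le_trans (decomp n) (sup_le (PleS n) ?_)
        refine le_trans (Submodule.map_mono (ih (n+2) (by omega))) NmapS
    intro n
    exact key (M+1) n (by omega)
  have htop : (⨆ p, A p) = ⊤ := by
    rw [eq_top_iff, ← hmixed.submodule_iSup_eq_top]
    refine iSup_le fun w => ?_
    by_cases hw : ∃ r : ℤ, w = k + r
    · obtain ⟨r, rfl⟩ := hw
      rcases le_or_gt 0 r with hr | hr
      · have : k + (r : ℚ) = k + ((r.toNat : ℕ) : ℚ) := by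
          congr 1
          exact_mod_cast (Int.toNat_of_nonneg hr).symm
        rw [this]
        exact WposS r.toNat
      · set m : ℕ := (-r).toNat with hm
        have hm1 : 1 ≤ m := by omega
        have hmz : (m : ℤ) = -r := by omega
        have hmr : (m : ℚ) = -(r : ℚ) := by exact_mod_cast congrArg (fun z : ℤ => (z : ℚ)) hmz
        have heq : k + (r : ℚ) = k - m := by rw [hmr]; ring
        rw [heq, ← surjN m hm1]
        exact le_trans (Submodule.map_mono (WposS m)) (NpowS m)
    · rw [hvanish w hw]; exact bot_le
  -- zero-sum lemma for a single weight fiber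
  have Zfiber : ∀ (r : ℤ) (s : Finset {x : ℕ × ℕ // x.2 ≤ x.1}),
      (∀ p ∈ s, ((p.1.1 : ℤ) - 2 * (p.1.2 : ℤ) = r)) →
      ∀ (g : {x : ℕ × ℕ // x.2 ≤ x.1} → V), (∀ p ∈ s, g p ∈ A p) →
      ∑ p ∈ s, g p = 0 → ∀ p ∈ s, g p = 0 := by
    intro r s
    induction s using Finset.strongInduction with
    | _ s ih =>
      intro hr g hg hsum p hp
      have hne : (s.image fun p => p.1.2).Nonempty := ⟨p.1.2, Finset.mem_image_of_mem _ hp⟩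
      obtain ⟨pm, hpm, hpmJ⟩ := Finset.mem_image.mp ((s.image fun p => p.1.2).max'_mem hne)
      have hgpm : g pm = 0 := by
        obtain ⟨y, hy, hyg⟩ := hg pm hpm
        have hjm : pm.1.2 ≤ pm.1.1 := pm.2
        have hkill : ∀ p' ∈ s, p' ≠ pm → (N ^ (pm.1.1 - pm.1.2)) (g p') = 0 := by
          intro p' hp' hne'
          obtain ⟨y', hy', hyg'⟩ := hg p' hp'
          have hj' : p'.1.2 < pm.1.2 := by
            have hle : p'.1.2 ≤ (s.image fun p => p.1.2).max' hne :=
              Finset.le_max' (s.image fun p => p.1.2) p'.1.2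
                (Finset.mem_image_of_mem (fun p => p.1.2) hp')
            rw [← hpmJ] at hle
            rcases lt_or_eq_of_le hle with h | h
            · exact h
            · exfalso
              apply hne'
              have h1 := hr p' hp'
              have h2 := hr pm hpm
              have hii : p'.1.1 = pm.1.1 := by omega
              exact Subtype.ext (Prod.ext hii h)
          rw [← hyg', ← Module.End.mul_apply, ← pow_add]
          have h1 := hr p' hp'
          have h2 := hr pm hpm
          have harith : pm.1.1 - pm.1.2 + p'.1.2 =
              (pm.1.1 - pm.1.2 + p'.1.2 - (p'.1.1 + 1)) + (p'.1.1 + 1) := by omega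
          rw [harith, pow_add, Module.End.mul_apply,
            LinearMap.mem_ker.mp (Submodule.mem_inf.mp hy').2, map_zero]
        have h0 : (N ^ (pm.1.1 - pm.1.2)) (g pm) = 0 := by
          have hc := congrArg (N ^ (pm.1.1 - pm.1.2)) hsum
          rw [map_sum, map_zero] at hc
          rwa [Finset.sum_eq_single_of_mem pm hpm (fun p' hp' hne' => hkill p' hp' hne')] at hc
        have hNy : (N ^ pm.1.1) y = 0 := by
          rw [show pm.1.1 = (pm.1.1 - pm.1.2) + pm.1.2 by omega, pow_add, Module.End.mul_apply,
            hyg]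
          exact h0
        have hy0 : y = 0 := injN pm.1.1 y (Submodule.mem_inf.mp hy).1 hNy
        rw [← hyg, hy0, map_zero]
      rcases eq_or_ne p pm with rfl | hnepm
      · exact hgpm
      · have hsum' : ∑ p' ∈ s.erase pm, g p' = 0 := by
          rw [← Finset.add_sum_erase s g hpm, hgpm, zero_add] at hsum
          exact hsum
        exact ih (s.erase pm) (Finset.erase_ssubset hpm)
          (fun p' hp' => hr p' (Finset.mem_of_mem_erase hp'))
          g (fun p' hp' => hg p' (Finset.mem_of_mem_erase hp')) hsum'
          p (Finset.mem_erase.mpr ⟨hnepm, hp⟩)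
  -- zero-sum lemma across weights
  have Zw : ∀ (t : Finset ℚ) (h : ℚ → V), (∀ w ∈ t, h w ∈ wdWeightSpace q φ w) →
      ∑ w ∈ t, h w = 0 → ∀ w ∈ t, h w = 0 := by
    intro t h hmem hsum w hw
    have hind := hmixed.submodule_iSupIndep
    have h1 : h w = - ∑ w' ∈ t.erase w, h w' := by
      rw [← Finset.add_sum_erase t h hw] at hsum
      exact eq_neg_of_add_eq_zero_left hsum
    have h2 : ∑ w' ∈ t.erase w, h w' ∈ ⨆ (w') (_ : w' ≠ w), wdWeightSpace q φ w' := by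
      refine Submodule.sum_mem _ fun w' hw' => ?_
      exact Submodule.mem_iSup_of_mem w'
        (Submodule.mem_iSup_of_mem (Finset.ne_of_mem_erase hw')
          (hmem w' (Finset.mem_of_mem_erase hw')))
    exact Submodule.disjoint_def.mp (iSupIndep_def.mp hind w) (h w) (hmem w hw)
      (by rw [h1]; exact neg_mem h2)
  -- independence of the pieces
  have hindep : iSupIndep A := by
    rw [iSupIndep_def]
    intro p₀
    rw [Submodule.disjoint_def]
    intro x hx hx'
    rw [iSup_subtype'] at hx'
    rw [Submodule.mem_iSup_iff_exists_finsupp] at hx'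
    obtain ⟨f, hf, hfsum⟩ := hx'
    set s0 : Finset {x : ℕ × ℕ // x.2 ≤ x.1} := f.support.image Subtype.val with hs0
    have hp0s0 : p₀ ∉ s0 := by
      rw [hs0]
      intro hmem0
      obtain ⟨u, _, hu⟩ := Finset.mem_image.mp hmem0
      exact u.2 hu
    set s : Finset {x : ℕ × ℕ // x.2 ≤ x.1} := insert p₀ s0 with hs
    set g : {x : ℕ × ℕ // x.2 ≤ x.1} → V :=
      fun p => if h : p = p₀ then x else - f ⟨p, h⟩ with hg
    have hgp0 : g p₀ = x := by rw [hg]; simp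
    have hgmem : ∀ p ∈ s, g p ∈ A p := by
      intro p hp
      rw [hg]
      by_cases h : p = p₀
      · subst h; simpa using hx
      · simp only [dif_neg h]
        exact neg_mem (hf ⟨p, h⟩)
    have hgsum : ∑ p ∈ s, g p = 0 := by
      rw [hs, Finset.sum_insert hp0s0, hgp0]
      have hsub : ∑ p ∈ s0, g p = - x := by
        rw [hs0, Finset.sum_image (fun a _ b _ h => Subtype.ext h)]
        have : ∀ u ∈ f.support, g u.val = - f u := by
          intro u _
          rw [hg]
          simp only [dif_neg u.2]
        rw [Finset.sum_congr rfl this, Finset.sum_neg_distrib]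
        rw [← hfsum]
        rfl
      rw [hsub, add_neg_cancel]
    -- group by weight
    set ρ : {x : ℕ × ℕ // x.2 ≤ x.1} → ℚ :=
      fun p => k + (((p.1.1 : ℤ) - 2 * (p.1.2 : ℤ) : ℤ) : ℚ) with hρ
    have hAW : ∀ p, A p ≤ wdWeightSpace q φ (ρ p) := by
      intro p
      rw [hA, hρ]
      refine le_trans (Submodule.map_mono inf_le_left) ?_
      exact wd_map_pow_weight hq hrel _ _ _ (by push_cast; ring)
    have hfibers : ∀ w ∈ s.image ρ, ∑ p ∈ s.filter (fun p => ρ p = w), g p = 0 := by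
      refine Zw (s.image ρ) (fun w => ∑ p ∈ s.filter (fun p => ρ p = w), g p) ?_ ?_
      · intro w hw
        refine Submodule.sum_mem _ fun p hp => ?_
        obtain ⟨hps, hpw⟩ := Finset.mem_filter.mp hp
        exact hpw ▸ hAW p (hgmem p hps)
      · rw [Finset.sum_fiberwise_of_maps_to (fun p hp => Finset.mem_image_of_mem ρ hp)]
        exact hgsum
    have hfib0 := hfibers (ρ p₀) (Finset.mem_image_of_mem ρ (Finset.mem_insert_self p₀ s0))
    have hfr : ∀ p ∈ s.filter (fun p => ρ p = ρ p₀),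
        ((p.1.1 : ℤ) - 2 * (p.1.2 : ℤ) = (p₀.1.1 : ℤ) - 2 * (p₀.1.2 : ℤ)) := by
      intro p hp
      have hq2 : k + (((p.1.1 : ℤ) - 2 * (p.1.2 : ℤ) : ℤ) : ℚ) =
          k + (((p₀.1.1 : ℤ) - 2 * (p₀.1.2 : ℤ) : ℤ) : ℚ) := (Finset.mem_filter.mp hp).2
      have h2 : ((((p.1.1 : ℤ) - 2 * (p.1.2 : ℤ) : ℤ)) : ℚ) =
          ((((p₀.1.1 : ℤ) - 2 * (p₀.1.2 : ℤ) : ℤ)) : ℚ) := by linarith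
      exact_mod_cast h2
    have hp0mem : p₀ ∈ s.filter (fun p => ρ p = ρ p₀) :=
      Finset.mem_filter.mpr ⟨Finset.mem_insert_self p₀ s0, rfl⟩
    have := Zfiber ((p₀.1.1 : ℤ) - 2 * (p₀.1.2 : ℤ)) (s.filter (fun p => ρ p = ρ p₀))
      hfr g (fun p hp => hgmem p (Finset.mem_of_mem_filter p hp)) hfib0 p₀ hp0mem
    rw [hgp0] at this
    exact this
  exact DirectSum.isInternal_submodule_of_iSupIndep_of_iSup_eq_top hindep htop
end
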